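/- arXiv:2202.00627 — 7 statements merged into one kernel-verified Lean document; each statement's English description precedes it below -/
import Mathlib

section
/- For any integer n ≥ 2, the maximum of the product m₁⋯m_k over all k ≤ n and all positive integers m₁,…,m_k with m₁+⋯+m_k = n equals 3^(n/3) if n ≡ 0 (mod 3), equals 4·3^((n-4)/3) if n ≡ 1 (mod 3), and equals 2·3^((n-2)/3) if n ≡ 2 (mod 3). -/
private def fmax (n : ℕ) : ℕ :=
  if n % 3 = 0 then 3 ^ (n / 3)
  else if n % 3 = 1 then (if n = 1 then 1 else 4 * 3 ^ ((n - 4) / 3))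
  else 2 * 3 ^ ((n - 2) / 3)

private lemma fmax_0 (k : ℕ) : fmax (3 * k) = 3 ^ k := by
  unfold fmax
  rw [if_pos (by omega)]
  congr 1; omega

private lemma fmax_1 (k : ℕ) (hk : 1 ≤ k) : fmax (3 * k + 1) = 4 * 3 ^ (k - 1) := by
  unfold fmax
  rw [if_neg (by omega), if_pos (by omega), if_neg (by omega)]
  congr 2; omega

private lemma fmax_one : fmax 1 = 1 := by decide

private lemma fmax_2 (k : ℕ) : fmax (3 * k + 2) = 2 * 3 ^ k := by
  unfold fmax
  rw [if_neg (by omega), if_neg (by omega)]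
  congr 2; omega

private lemma fmax_mono (n : ℕ) : fmax n ≤ fmax (n + 1) := by
  obtain ⟨q, r, hr, rfl⟩ : ∃ q r, r < 3 ∧ n = 3 * q + r :=
    ⟨n / 3, n % 3, Nat.mod_lt _ (by norm_num), (Nat.div_add_mod n 3).symm⟩
  interval_cases r
  · rcases Nat.eq_zero_or_pos q with rfl | hq
    · decide
    · rw [show 3*q+0 = 3*q by ring, show 3*q+0+1 = 3*q+1 by ring, fmax_0, fmax_1 q hq]
      obtain ⟨q', rfl⟩ : ∃ q', q = q' + 1 := ⟨q - 1, by omega⟩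
      rw [show q'+1-1 = q' by omega, pow_succ]
      nlinarith [Nat.one_le_pow q' 3 (by norm_num : 0 < 3)]
  · rcases Nat.eq_zero_or_pos q with rfl | hq
    · rw [show 3*0+1 = 1 by ring, show 3*0+1+1 = 3*0+2 by ring, fmax_one, fmax_2]; norm_num
    · rw [fmax_1 q hq, show 3*q+1+1 = 3*q+2 by ring, fmax_2]
      obtain ⟨q', rfl⟩ : ∃ q', q = q' + 1 := ⟨q - 1, by omega⟩
      rw [show q'+1-1 = q' by omega, pow_succ]
      nlinarith [Nat.one_le_pow q' 3 (by norm_num : 0 < 3)]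
  · rw [fmax_2, show 3*q+2+1 = 3*(q+1) by ring, fmax_0, pow_succ]
    nlinarith [Nat.one_le_pow q 3 (by norm_num : 0 < 3)]

private lemma fmax_superadd (a b : ℕ) : fmax a * fmax b ≤ fmax (a + b) := by
  rcases le_or_gt a 1 with ha | ha
  · interval_cases a
    · have h0 : fmax 0 = 1 := by decide
      rw [Nat.zero_add, h0, Nat.one_mul]
    · rw [fmax_one, Nat.one_mul, Nat.add_comm 1 b]; exact fmax_mono b
  rcases le_or_gt b 1 with hb | hb
  · interval_cases b
    · have h0 : fmax 0 = 1 := by decide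
      rw [Nat.add_zero, h0, Nat.mul_one]
    · rw [fmax_one, Nat.mul_one]; exact fmax_mono a
  obtain ⟨q, r, hr, rfl⟩ : ∃ q r, r < 3 ∧ a = 3 * q + r :=
    ⟨a / 3, a % 3, Nat.mod_lt _ (by norm_num), (Nat.div_add_mod a 3).symm⟩
  obtain ⟨s, t, ht, rfl⟩ : ∃ s t, t < 3 ∧ b = 3 * s + t :=
    ⟨b / 3, b % 3, Nat.mod_lt _ (by norm_num), (Nat.div_add_mod b 3).symm⟩
  interval_cases r <;> interval_cases t
  · -- (0,0)
    rw [show 3*q+0+(3*s+0) = 3*(q+s) by ring, show 3*q+0 = 3*q by ring,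
      show 3*s+0 = 3*s by ring, fmax_0, fmax_0, fmax_0, pow_add]
  · -- (0,1)
    have hs : 1 ≤ s := by omega
    obtain ⟨s', rfl⟩ : ∃ s', s = s' + 1 := ⟨s - 1, by omega⟩
    rw [show 3*q+0+(3*(s'+1)+1) = 3*(q+s'+1)+1 by ring, show 3*q+0 = 3*q by ring,
      fmax_0, fmax_1 _ (by omega), fmax_1 _ (by omega),
      show s'+1-1 = s' by omega, show q+s'+1-1 = q+s' by omega, pow_add]
    exact le_of_eq (by ring)
  · -- (0,2)
    rw [show 3*q+0+(3*s+2) = 3*(q+s)+2 by ring, show 3*q+0 = 3*q by ring,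
      fmax_0, fmax_2, fmax_2, pow_add]
    exact le_of_eq (by ring)
  · -- (1,0)
    obtain ⟨q', rfl⟩ : ∃ q', q = q' + 1 := ⟨q - 1, by omega⟩
    rw [show 3*(q'+1)+1+(3*s+0) = 3*(q'+s+1)+1 by ring, show 3*s+0 = 3*s by ring,
      fmax_0, fmax_1 _ (by omega), fmax_1 _ (by omega),
      show q'+1-1 = q' by omega, show q'+s+1-1 = q'+s by omega, pow_add]
    exact le_of_eq (by ring)
  · -- (1,1)
    obtain ⟨q', rfl⟩ : ∃ q', q = q' + 1 := ⟨q - 1, by omega⟩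
    obtain ⟨s', rfl⟩ : ∃ s', s = s' + 1 := ⟨s - 1, by omega⟩
    rw [show 3*(q'+1)+1+(3*(s'+1)+1) = 3*(q'+s'+2)+2 by ring,
      fmax_1 _ (by omega), fmax_1 _ (by omega), fmax_2,
      show q'+1-1 = q' by omega, show s'+1-1 = s' by omega]
    calc 4*3^q' * (4*3^s') = 16*(3^q'*3^s') := by ring
      _ ≤ 18*(3^q'*3^s') := Nat.mul_le_mul_right _ (by norm_num)
      _ = 2*3^(q'+s'+2) := by rw [pow_add, pow_add]; ring
  · -- (1,2)
    obtain ⟨q', rfl⟩ : ∃ q', q = q' + 1 := ⟨q - 1, by omega⟩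
    rw [show 3*(q'+1)+1+(3*s+2) = 3*(q'+s+2) by ring,
      fmax_1 _ (by omega), fmax_2, fmax_0, show q'+1-1 = q' by omega]
    calc 4*3^q' * (2*3^s) = 8*(3^q'*3^s) := by ring
      _ ≤ 9*(3^q'*3^s) := Nat.mul_le_mul_right _ (by norm_num)
      _ = 3^(q'+s+2) := by rw [pow_add, pow_add]; ring
  · -- (2,0)
    rw [show 3*q+2+(3*s+0) = 3*(q+s)+2 by ring, show 3*s+0 = 3*s by ring,
      fmax_0, fmax_2, fmax_2, pow_add]
    exact le_of_eq (by ring)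
  · -- (2,1)
    obtain ⟨s', rfl⟩ : ∃ s', s = s' + 1 := ⟨s - 1, by omega⟩
    rw [show 3*q+2+(3*(s'+1)+1) = 3*(q+s'+2) by ring,
      fmax_1 _ (by omega), fmax_2, fmax_0, show s'+1-1 = s' by omega]
    calc 2*3^q * (4*3^s') = 8*(3^q*3^s') := by ring
      _ ≤ 9*(3^q*3^s') := Nat.mul_le_mul_right _ (by norm_num)
      _ = 3^(q+s'+2) := by rw [pow_add, pow_add]; ring
  · -- (2,2)
    rw [show 3*q+2+(3*s+2) = 3*(q+s+1)+1 by ring, fmax_2, fmax_2,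
      fmax_1 _ (by omega), show q+s+1-1 = q+s by omega, pow_add]
    exact le_of_eq (by ring)

private lemma le_fmax (a : ℕ) : a ≤ fmax a := by
  have key : ∀ m : ℕ, m + 1 ≤ 3 ^ m := by
    intro m
    induction m with
    | zero => simp
    | succ k ih =>
      have h1 : 1 ≤ 3 ^ k := Nat.one_le_pow _ _ (by norm_num)
      rw [pow_succ]; nlinarith
  obtain ⟨q, r, hr, rfl⟩ : ∃ q r, r < 3 ∧ a = 3 * q + r :=
    ⟨a / 3, a % 3, Nat.mod_lt _ (by norm_num), (Nat.div_add_mod a 3).symm⟩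
  interval_cases r
  · rw [show 3*q+0 = 3*q by ring, fmax_0]
    have := key q
    rcases Nat.eq_zero_or_pos q with rfl | hq
    · simp
    · obtain ⟨q', rfl⟩ : ∃ q', q = q' + 1 := ⟨q - 1, by omega⟩
      have := key q'
      rw [pow_succ]; nlinarith
  · rcases Nat.eq_zero_or_pos q with rfl | hq
    · rw [show 3*0+1 = 1 by ring, fmax_one]
    · rw [fmax_1 q hq]
      obtain ⟨q', rfl⟩ : ∃ q', q = q' + 1 := ⟨q - 1, by omega⟩
      rw [show q'+1-1 = q' by omega]
      have := key q'
      nlinarith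
  · rw [fmax_2]
    rcases Nat.eq_zero_or_pos q with rfl | hq
    · simp
    · obtain ⟨q', rfl⟩ : ∃ q', q = q' + 1 := ⟨q - 1, by omega⟩
      have := key q'
      rw [pow_succ]; nlinarith

private lemma prod_le_fmax (l : List ℕ) (h : ∀ x ∈ l, 1 ≤ x) : l.prod ≤ fmax l.sum := by
  induction l with
  | nil => simp [fmax]
  | cons a t ih =>
    simp only [List.prod_cons, List.sum_cons]
    calc a * t.prod ≤ fmax a * fmax t.sum :=
          Nat.mul_le_mul (le_fmax a) (ih fun x hx => h x (List.mem_cons_of_mem _ hx))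
      _ ≤ fmax (a + t.sum) := fmax_superadd _ _

/-- For `n ≥ 2`, the maximum of products of parts of partitions of `n`
into at most `n` positive parts. -/
theorem max_product_of_partition (n : ℕ) (hn : 2 ≤ n) :
    (n % 3 = 0 → IsGreatest
      {P : ℕ | ∃ l : List ℕ, l.length ≤ n ∧ (∀ x ∈ l, 1 ≤ x) ∧ l.sum = n ∧ P = l.prod}
      (3 ^ (n / 3))) ∧
    (n % 3 = 1 → IsGreatest
      {P : ℕ | ∃ l : List ℕ, l.length ≤ n ∧ (∀ x ∈ l, 1 ≤ x) ∧ l.sum = n ∧ P = l.prod}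
      (4 * 3 ^ ((n - 4) / 3))) ∧
    (n % 3 = 2 → IsGreatest
      {P : ℕ | ∃ l : List ℕ, l.length ≤ n ∧ (∀ x ∈ l, 1 ≤ x) ∧ l.sum = n ∧ P = l.prod}
      (2 * 3 ^ ((n - 2) / 3))) := by
  have hub : ∀ P ∈ {P : ℕ | ∃ l : List ℕ, l.length ≤ n ∧ (∀ x ∈ l, 1 ≤ x) ∧
      l.sum = n ∧ P = l.prod}, P ≤ fmax n := by
    rintro P ⟨l, _, hpos, hsum, rfl⟩
    simpa [hsum] using prod_le_fmax l hpos
  refine ⟨fun h0 => ⟨?_, ?_⟩, fun h1 => ⟨?_, ?_⟩, fun h2 => ⟨?_, ?_⟩⟩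
  · exact ⟨List.replicate (n/3) 3, by simp; omega,
      fun x hx => by simp at hx; omega, by simp; omega, by simp⟩
  · intro P hP
    have he : fmax n = 3 ^ (n / 3) := by unfold fmax; rw [if_pos h0]
    exact he ▸ hub P hP
  · exact ⟨4 :: List.replicate ((n-4)/3) 3, by simp; omega,
      fun x hx => by simp at hx; omega, by simp; omega, by simp⟩
  · intro P hP
    have he : fmax n = 4 * 3 ^ ((n-4)/3) := by
      unfold fmax; rw [if_neg (by omega), if_pos h1, if_neg (by omega)]
    exact he ▸ hub P hP
  · exact ⟨2 :: List.replicate ((n-2)/3) 3, by simp; omega,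
      fun x hx => by simp at hx; omega, by simp; omega, by simp⟩
  · intro P hP
    have he : fmax n = 2 * 3 ^ ((n-2)/3) := by
      unfold fmax; rw [if_neg (by omega), if_neg (by omega)]
    exact he ▸ hub P hP
end

section
/- For any integer n ≥ 8 with n ≡ 2 (mod 3), the second largest value of the product m₁⋯m_k over all partitions m₁+⋯+m_k = n into positive integer parts equals 16·3^((n-8)/3). -/
/-- Maximal product of a partition of `n` into positive parts. -/
def MaxP : ℕ → ℕ
  | 0 => 1
  | 1 => 1
  | 2 => 2
  | 3 => 3
  | 4 => 4
  | (k+5) => 3 * MaxP (k+2)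

lemma MaxP_two_mul : ∀ k, 2 * MaxP k ≤ MaxP (k + 2)
  | 0 => by decide
  | 1 => by decide
  | 2 => by decide
  | 3 => by decide
  | 4 => by decide
  | (k+5) => by
    have ih : 2 * MaxP (k+2) ≤ MaxP (k+4) := MaxP_two_mul (k+2)
    show 2 * (3 * MaxP (k+2)) ≤ 3 * MaxP (k+4)
    omega

lemma MaxP_mono : ∀ k, MaxP k ≤ MaxP (k + 1)
  | 0 => by decide
  | 1 => by decide
  | 2 => by decide
  | 3 => by decide
  | 4 => by decide
  | (k+5) => by
    have ih : MaxP (k+2) ≤ MaxP (k+3) := MaxP_mono (k+2)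
    show 3 * MaxP (k+2) ≤ 3 * MaxP (k+3)
    omega

lemma MaxP_three : ∀ k, 3 * MaxP k ≤ MaxP (k + 3)
  | 0 => by decide
  | 1 => by decide
  | (k+2) => le_of_eq rfl

lemma MaxP_mul : ∀ a, 1 ≤ a → ∀ k, a * MaxP k ≤ MaxP (a + k)
  | 1, _, k => by simpa [Nat.add_comm] using MaxP_mono k
  | 2, _, k => by simpa [Nat.add_comm] using MaxP_two_mul k
  | 3, _, k => by simpa [Nat.add_comm] using MaxP_three k
  | 4, _, k => by
    have h1 : 2 * MaxP k ≤ MaxP (k+2) := MaxP_two_mul k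
    have h2 : 2 * MaxP (k+2) ≤ MaxP (k+4) := MaxP_two_mul (k+2)
    have : 4 + k = k + 4 := by omega
    rw [this]
    omega
  | (a+5), _, k => by
    have h1 : (a+3) * MaxP k ≤ MaxP (a+3+k) := MaxP_mul (a+3) (by omega) k
    have h2 : 2 * MaxP (a+3+k) ≤ MaxP (a+3+k+2) := MaxP_two_mul (a+3+k)
    have h3 : a+5+k = a+3+k+2 := by omega
    rw [h3]
    have h4 : (a+5) * MaxP k ≤ 2 * ((a+3) * MaxP k) := by nlinarith [Nat.zero_le (MaxP k)]
    calc (a+5) * MaxP k ≤ 2 * ((a+3) * MaxP k) := h4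
      _ ≤ 2 * MaxP (a+3+k) := by omega
      _ ≤ MaxP (a+3+k+2) := h2

lemma prod_le_MaxP : ∀ l : List ℕ, (∀ x ∈ l, 1 ≤ x) → l.prod ≤ MaxP l.sum
  | [], _ => le_of_eq rfl
  | (a :: t), h => by
    have ht := prod_le_MaxP t (fun x hx => h x (List.mem_cons_of_mem _ hx))
    have ha : 1 ≤ a := h a List.mem_cons_self
    calc (a :: t).prod = a * t.prod := rfl
      _ ≤ a * MaxP t.sum := Nat.mul_le_mul_left a ht
      _ ≤ MaxP (a + t.sum) := MaxP_mul a ha t.sum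
      _ = MaxP (a :: t).sum := rfl

lemma MaxP_shift : ∀ j c, MaxP (c + 2 + 3 * j) = 3 ^ j * MaxP (c + 2)
  | 0, c => by simp
  | (j+1), c => by
    have ih : MaxP (c + 3 + 2 + 3 * j) = 3 ^ j * MaxP (c + 3 + 2) := MaxP_shift j (c+3)
    have e1 : c + 2 + 3 * (j+1) = c + 3 + 2 + 3 * j := by ring
    have e2 : MaxP (c + 3 + 2) = 3 * MaxP (c + 2) := rfl
    rw [e1, ih, e2, pow_succ]
    ring


lemma list234 : ∀ l : List ℕ, (∀ x ∈ l, x = 2 ∨ x = 3 ∨ x = 4) →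
    ∃ t s : ℕ, l.sum = 2 * t + 3 * s ∧ l.prod = 2 ^ t * 3 ^ s
  | [], _ => ⟨0, 0, by simp⟩
  | (a :: l), h => by
    obtain ⟨t, s, hsum, hprod⟩ := list234 l (fun x hx => h x (List.mem_cons_of_mem _ hx))
    rcases h a List.mem_cons_self with rfl | rfl | rfl
    · exact ⟨t+1, s, by simp [hsum]; ring, by simp [hprod]; ring⟩
    · exact ⟨t, s+1, by simp [hsum]; ring, by simp [hprod]; ring⟩
    · exact ⟨t+2, s, by simp [hsum]; ring, by simp [hprod]; ring⟩

lemma pow89 : ∀ j : ℕ, 9 * 8 ^ (j+1) ≤ 8 * 9 ^ (j+1)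
  | 0 => by norm_num
  | (j+1) => by
    have ih := pow89 j
    calc 9 * 8 ^ (j+2) = 8 * (9 * 8 ^ (j+1)) := by ring
      _ ≤ 8 * (8 * 9 ^ (j+1)) := by omega
      _ ≤ 9 * (8 * 9 ^ (j+1)) := by omega
      _ = 8 * 9 ^ (j+2) := by ring

/-- For `n ≥ 8` with `n ≡ 2 (mod 3)`, the second largest product of parts over
partitions of `n` into positive parts equals `16·3^((n-8)/3)`; i.e. it is the
greatest product strictly smaller than the maximal product `2·3^((n-2)/3)`. -/
theorem second_largest_product (n : ℕ) (hn : 8 ≤ n) (h3 : n % 3 = 2) :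
    IsGreatest
      {P : ℕ | ∃ l : List ℕ, (∀ x ∈ l, 1 ≤ x) ∧ l.sum = n ∧ P = l.prod ∧
        P < 2 * 3 ^ ((n - 2) / 3)}
      (16 * 3 ^ ((n - 8) / 3)) := by
  obtain ⟨m, rfl⟩ : ∃ m, n = 3 * m + 8 := ⟨(n - 8) / 3, by omega⟩
  have hm8 : (3 * m + 8 - 8) / 3 = m := by omega
  have hm2 : (3 * m + 8 - 2) / 3 = m + 2 := by omega
  have hpow : (1:ℕ) ≤ 3 ^ m := Nat.one_le_pow _ _ (by norm_num)
  constructor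
  · refine ⟨4 :: 4 :: List.replicate m 3, ?_, ?_, ?_, ?_⟩
    · intro x hx
      simp only [List.mem_cons, List.mem_replicate] at hx
      omega
    · simp [List.sum_replicate, Nat.smul_one_eq_cast]
      omega
    · simp [List.prod_replicate, hm8]
      ring
    · rw [hm8, hm2, pow_add]
      nlinarith
  · rintro P ⟨l, hpos, hsum, rfl, hlt⟩
    rw [hm2] at hlt
    rw [hm8]
    by_contra hcon
    push_neg at hcon
    -- key values of MaxP
    have hMn2 : MaxP (3 * m + 6) = 3 ^ (m + 1) * 3 := by
      have h := MaxP_shift (m + 1) 1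
      rw [show 1 + 2 + 3 * (m+1) = 3 * m + 6 by ring] at h
      exact h
    have hMn1 : MaxP (3 * m + 7) = 3 ^ (m + 1) * 4 := by
      have h := MaxP_shift (m + 1) 2
      rw [show 2 + 2 + 3 * (m+1) = 3 * m + 7 by ring] at h
      exact h
    by_cases h1 : 1 ∈ l
    · -- a part equal to 1
      have he : (1:ℕ) + (l.erase 1).sum = l.sum := List.sum_erase h1
      have hp : (1:ℕ) * (l.erase 1).prod = l.prod := List.prod_erase h1
      have hb : (l.erase 1).prod ≤ MaxP ((l.erase 1).sum) :=
        prod_le_MaxP _ (fun x hx => hpos x (List.mem_of_mem_erase hx))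
      have hes : (l.erase 1).sum = 3 * m + 7 := by omega
      rw [hes, hMn1] at hb
      have h3m : (3:ℕ) ^ (m+1) = 3 * 3 ^ m := by rw [pow_succ]; ring
      omega
    · by_cases h5 : ∃ a ∈ l, 5 ≤ a
      · obtain ⟨a, ha, ha5⟩ := h5
        have he : a + (l.erase a).sum = l.sum := List.sum_erase ha
        have hp : a * (l.erase a).prod = l.prod := List.prod_erase ha
        have hb : (l.erase a).prod ≤ MaxP ((l.erase a).sum) :=
          prod_le_MaxP _ (fun x hx => hpos x (List.mem_of_mem_erase hx))
        set r := (l.erase a).prod with hr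
        have hbig : (a - 2) * MaxP ((l.erase a).sum) ≤ MaxP ((a - 2) + (l.erase a).sum) :=
          MaxP_mul (a - 2) (by omega) _
        have hsum2 : (a - 2) + (l.erase a).sum = 3 * m + 6 := by omega
        rw [hsum2, hMn2] at hbig
        -- 6 * l.prod = 6 * a * r ≤ 10 * (a-2) * r ≤ 10 * (a-2) * MaxP ≤ 10 * 3^(m+2)
        have h6 : 6 * l.prod ≤ 10 * ((a - 2) * r) := by
          rw [← hp]
          have : 6 * a ≤ 10 * (a - 2) := by omega
          calc 6 * (a * r) = (6 * a) * r := by ring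
            _ ≤ (10 * (a - 2)) * r := Nat.mul_le_mul_right r this
            _ = 10 * ((a - 2) * r) := by ring
        have h7 : (a - 2) * r ≤ (a - 2) * MaxP ((l.erase a).sum) :=
          Nat.mul_le_mul_left _ hb
        have h8 : 6 * l.prod ≤ 10 * (3 ^ (m+1) * 3) := by
          calc 6 * l.prod ≤ 10 * ((a-2) * r) := h6
            _ ≤ 10 * ((a - 2) * MaxP ((l.erase a).sum)) := by omega
            _ ≤ 10 * (3 ^ (m+1) * 3) := by omega
        have h3m : (3:ℕ) ^ (m+1) = 3 * 3 ^ m := by rw [pow_succ]; ring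
        omega
      · -- all parts in {2,3,4}
        push_neg at h5
        have h234 : ∀ x ∈ l, x = 2 ∨ x = 3 ∨ x = 4 := by
          intro x hx
          have := hpos x hx
          have := h5 x hx
          have : x ≠ 1 := fun h => h1 (h ▸ hx)
          omega
        obtain ⟨t, s, hts, hpr⟩ := list234 l h234
        rw [hsum] at hts
        have ht3 : t % 3 = 1 := by omega
        obtain ⟨j, rfl⟩ : ∃ j, t = 3 * j + 1 := ⟨t / 3, by omega⟩
        rcases Nat.eq_zero_or_pos j with rfl | hj
        · -- maximal product, contradicts hlt
          have hs : s = m + 2 := by omega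
          rw [hpr, hs] at hlt
          norm_num at hlt
        · -- j ≥ 1 : prod ≤ 16 * 3^m
          have hse : s + 2 * j = m + 2 := by omega
          have key : 2 ^ (3 * j + 1) * 3 ^ s ≤ 16 * 3 ^ m := by
            have h89 : 9 * 8 ^ j ≤ 8 * 9 ^ j := by
              obtain ⟨i, rfl⟩ : ∃ i, j = i + 1 := ⟨j - 1, by omega⟩
              exact pow89 i
            have hmul : (2 ^ (3 * j + 1) * 3 ^ s) * 3 ^ (2 * j) ≤ (16 * 3 ^ m) * 3 ^ (2 * j) := by
              have e1 : (2 ^ (3 * j + 1) * 3 ^ s) * 3 ^ (2 * j) = 2 * 8 ^ j * 3 ^ (m + 2) := by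
                rw [mul_assoc, ← pow_add, hse, pow_succ, pow_mul]
                norm_num
                ring
              have e2 : (16 * 3 ^ m) * 3 ^ (2 * j) = 16 * 9 ^ j * 3 ^ m := by
                rw [pow_mul]; norm_num; ring
              rw [e1, e2]
              have : 2 * 8 ^ j * 3 ^ (m + 2) = (9 * 8 ^ j) * (2 * 3 ^ m) := by
                rw [pow_add]; ring
              rw [this, show 16 * 9 ^ j * 3 ^ m = (8 * 9 ^ j) * (2 * 3 ^ m) by ring]
              exact Nat.mul_le_mul_right _ h89
            exact Nat.le_of_mul_le_mul_right hmul (Nat.pow_pos (by norm_num))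
          rw [hpr] at hcon
          omega
end

section
/- In the maximal-product partition of n ≥ 2 into positive parts, every part lies in {2,3,4}: more precisely, any partition achieving the maximal product of parts contains no part equal to 1 and no part greater than 4. -/
lemma aux_one_le_prod (s : Multiset ℕ) (h : ∀ x ∈ s, 1 ≤ x) : 1 ≤ s.prod := by
  induction s using Multiset.induction with
  | empty => simp
  | cons a t ih =>
    simp only [Multiset.prod_cons]
    have ha := h a (Multiset.mem_cons_self a t)
    have ht := ih (fun x hx => h x (Multiset.mem_cons_of_mem hx))
    exact one_le_mul ha ht

/-- Any partition of `n ≥ 2` into positive parts achieving the maximal product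
of parts has all parts in `{2,3,4}`: no part equal to `1` and no part `> 4`. -/
theorem maximal_product_parts_in_two_three_four (n : ℕ) (hn : 2 ≤ n)
    (m : Multiset ℕ) (hpos : ∀ x ∈ m, 1 ≤ x) (hsum : m.sum = n)
    (hmax : ∀ m' : Multiset ℕ, (∀ x ∈ m', 1 ≤ x) → m'.sum = n → m'.prod ≤ m.prod) :
    ∀ x ∈ m, 2 ≤ x ∧ x ≤ 4 := by
  intro x hx
  obtain ⟨t, rfl⟩ := Multiset.exists_cons_of_mem hx
  have hposx := hpos x hx
  have htpos : ∀ y ∈ t, 1 ≤ y := fun y hy => hpos y (Multiset.mem_cons_of_mem hy)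
  constructor
  · by_contra h
    have hx1 : x = 1 := by omega
    subst hx1
    -- t nonempty
    have hts : t.sum = n - 1 := by
      have := hsum
      simp [Multiset.sum_cons] at this
      omega
    have htne : t ≠ 0 := by
      intro h0
      rw [h0] at hts
      simp at hts
      omega
    obtain ⟨y, hy⟩ := Multiset.exists_mem_of_ne_zero htne
    obtain ⟨s, rfl⟩ := Multiset.exists_cons_of_mem hy
    have hspos : ∀ z ∈ s, 1 ≤ z := fun z hz => htpos z (Multiset.mem_cons_of_mem hz)
    have hsp := aux_one_le_prod s hspos
    have hle := hmax ((y + 1) ::ₘ s) ?_ ?_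
    · simp only [Multiset.prod_cons] at hle
      nlinarith
    · intro z hz
      rcases Multiset.mem_cons.1 hz with h | h
      · omega
      · exact hspos z h
    · have := hsum
      simp only [Multiset.sum_cons] at this ⊢
      omega
  · by_contra h
    have hx5 : 5 ≤ x := by omega
    have hsp := aux_one_le_prod t htpos
    have hle := hmax (2 ::ₘ (x - 2) ::ₘ t) ?_ ?_
    · simp only [Multiset.prod_cons] at hle
      nlinarith [Nat.sub_add_cancel (by omega : 2 ≤ x)]
    · intro z hz
      rcases Multiset.mem_cons.1 hz with h | h
      · omega
      · rcases Multiset.mem_cons.1 h with h | h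
        · omega
        · exact htpos z h
    · have := hsum
      simp only [Multiset.sum_cons] at this ⊢
      omega
end

section
/- For d ≥ 1, the coefficients p_d(n) defined by the infinite product generating function ∏_{n≥1} (1-q^n)^{-n^{d-1}} satisfy p_d(n) = Σ_{k≤n} (1/k!) Σ_{m₁,…,m_k ≥ 1, m₁+⋯+m_k = n} σ_d(m₁)⋯σ_d(m_k)/(m₁⋯m_k), where σ_d(m) = Σ_{t|m} t^d. -/
open PowerSeries Finset

noncomputable section

namespace PdAux

/-- The "log" series `L d = ∑_{m≥1} (σ_d(m)/m) X^m`. -/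
def L (d : ℕ) : PowerSeries ℚ :=
  PowerSeries.mk fun m => if m = 0 then 0 else ((∑ t ∈ m.divisors, t ^ d : ℕ) : ℚ) / m

/-- The "exp" series `E d = exp (L d)`, defined coefficientwise. -/
def E (d : ℕ) : PowerSeries ℚ :=
  PowerSeries.mk fun n =>
    ∑ k ∈ Finset.range (n + 1), ((Nat.factorial k : ℚ))⁻¹ * PowerSeries.coeff n ((L d) ^ k)

/-- Partial products. -/
def F (d N : ℕ) : PowerSeries ℚ :=
  ∏ n ∈ Finset.Icc 1 N, (1 - (PowerSeries.X : PowerSeries ℚ) ^ n) ^ (n ^ (d - 1))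

/-- Geometric-type series `∑_{M ∣ r} X^r`. -/
def geom (M : ℕ) : PowerSeries ℚ := PowerSeries.mk fun r => if M ∣ r then 1 else 0

/-- The remainder series in the logarithmic-derivative identity. -/
def Rs (d N : ℕ) : PowerSeries ℚ :=
  PowerSeries.mk fun r => ((∑ t ∈ (r + 1).divisors.filter (fun t => N < t), t ^ d : ℕ) : ℚ)

lemma geom_mul (M : ℕ) (hM : 1 ≤ M) :
    (1 - (PowerSeries.X : PowerSeries ℚ) ^ M) * geom M = 1 := by
  ext n
  rw [sub_mul, one_mul, map_sub, PowerSeries.coeff_X_pow_mul']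
  simp only [geom, PowerSeries.coeff_mk, PowerSeries.coeff_one]
  rcases Nat.eq_zero_or_pos n with rfl | hn
  · simp [show ¬ M ≤ 0 by omega]
  · have hne : ¬ n = 0 := by omega
    by_cases h : M ≤ n
    · have hiff : M ∣ n ↔ M ∣ n - M :=
        ⟨fun hd => Nat.dvd_sub hd dvd_rfl, fun hd => by
          have h2 := Nat.dvd_add hd (dvd_refl M)
          rwa [Nat.sub_add_cancel h] at h2⟩
      by_cases hdvd : M ∣ n
      · simp [h, hne, hdvd, hiff.1 hdvd]
      · have hnd2 : ¬ M ∣ (n - M) := fun hh => hdvd (hiff.2 hh)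
        simp [h, hne, hdvd, hnd2]
    · have hnd : ¬ M ∣ n := fun hdd => h (Nat.le_of_dvd hn hdd)
      simp [h, hne, hnd]

lemma derivative_X_pow (M : ℕ) :
    d⁄dX ℚ ((PowerSeries.X : PowerSeries ℚ) ^ M)
      = (M : ℚ) • (PowerSeries.X : PowerSeries ℚ) ^ (M - 1) := by
  ext n
  rw [PowerSeries.coeff_derivative, map_smul, PowerSeries.coeff_X_pow,
    PowerSeries.coeff_X_pow, smul_eq_mul]
  rcases Nat.eq_zero_or_pos M with rfl | hM
  · simp
  · by_cases h : n = M - 1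
    · rw [if_pos h, if_pos (by omega), mul_one]
      have hM1 : n + 1 = M := by omega
      rw [one_mul]
      exact_mod_cast hM1
    · rw [if_neg h, if_neg (by omega), mul_zero, zero_mul]

lemma derivative_L (d : ℕ) :
    d⁄dX ℚ (L d) = PowerSeries.mk fun r => ((∑ t ∈ (r + 1).divisors, t ^ d : ℕ) : ℚ) := by
  ext n
  rw [PowerSeries.coeff_derivative, PowerSeries.coeff_mk]
  simp only [L, PowerSeries.coeff_mk, if_neg (Nat.succ_ne_zero n)]
  have h0 : ((n : ℚ) + 1) ≠ 0 := by positivity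
  push_cast
  rw [div_mul_cancel₀ _ h0]

lemma Rs_zero (d : ℕ) : Rs d 0 = d⁄dX ℚ (L d) := by
  rw [derivative_L]
  ext n
  simp only [Rs, PowerSeries.coeff_mk]
  congr 2
  apply Finset.filter_true_of_mem
  intro t ht
  exact Nat.pos_of_mem_divisors ht

lemma Rs_succ (d N : ℕ) :
    Rs d N = Rs d (N + 1)
      + (((N + 1) ^ d : ℕ) : ℚ) • ((PowerSeries.X : PowerSeries ℚ) ^ N * geom (N + 1)) := by
  ext r
  simp only [Rs, PowerSeries.coeff_mk, map_add, map_smul, smul_eq_mul,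
    PowerSeries.coeff_X_pow_mul', geom]
  have hdvd_iff : (N + 1) ∣ (r + 1) ↔ (N ≤ r ∧ (N + 1) ∣ (r - N)) := by
    constructor
    · intro h
      have h1 : N ≤ r := by
        have := Nat.le_of_dvd (Nat.succ_pos r) h; omega
      refine ⟨h1, ?_⟩
      have h2 := Nat.dvd_sub h (dvd_refl (N + 1))
      have h3 : r + 1 - (N + 1) = r - N := by omega
      rwa [h3] at h2
    · rintro ⟨h1, h2⟩
      have h3 := Nat.dvd_add h2 (dvd_refl (N + 1))
      have h4 : r - N + (N + 1) = r + 1 := by omega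
      rwa [h4] at h3
  have hsplit : (r + 1).divisors.filter (fun t => N < t)
      = ((r + 1).divisors.filter (fun t => N + 1 < t)) ∪
        ((r + 1).divisors.filter (fun t => t = N + 1)) := by
    rw [← Finset.filter_or]
    apply Finset.filter_congr
    intro t ht
    omega
  have hdisj : Disjoint ((r + 1).divisors.filter (fun t => N + 1 < t))
      ((r + 1).divisors.filter (fun t => t = N + 1)) := by
    apply Finset.disjoint_left.mpr
    intro a ha hb
    simp only [Finset.mem_filter] at ha hb
    omega
  rw [hsplit, Finset.sum_union hdisj, Nat.cast_add]
  congr 1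
  rw [Finset.filter_eq']
  by_cases hmem : (N + 1) ∣ (r + 1)
  · have hN : N ≤ r := (hdvd_iff.mp hmem).1
    have hd2 : (N + 1) ∣ (r - N) := (hdvd_iff.mp hmem).2
    rw [if_pos (Nat.mem_divisors.mpr ⟨hmem, Nat.succ_ne_zero r⟩), Finset.sum_singleton,
      if_pos hN, if_pos hd2, mul_one]
  · rw [if_neg (fun hmm => hmem (Nat.mem_divisors.mp hmm).1), Finset.sum_empty]
    have hz : (if N ≤ r then (if (N + 1) ∣ (r - N) then (1 : ℚ) else 0) else 0) = 0 := by
      split_ifs with h1 h2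
      · exact absurd (hdvd_iff.mpr ⟨h1, h2⟩) hmem
      · rfl
      · rfl
    rw [hz, mul_zero, Nat.cast_zero]

lemma X_pow_dvd_Rs (d N : ℕ) : (PowerSeries.X : PowerSeries ℚ) ^ N ∣ Rs d N := by
  rw [PowerSeries.X_pow_dvd_iff]
  intro m hm
  simp only [Rs, PowerSeries.coeff_mk]
  rw [Finset.filter_false_of_mem, Finset.sum_empty, Nat.cast_zero]
  intro t ht
  have := Nat.divisor_le ht
  omega

lemma keyA (d : ℕ) (hd : 1 ≤ d) (N : ℕ) :
    d⁄dX ℚ (F d N) + d⁄dX ℚ (L d) * F d N = F d N * Rs d N := by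
  induction N with
  | zero =>
    have hF : F d 0 = 1 := by simp [F]
    rw [hF, Rs_zero, one_mul, mul_one, Derivation.map_one_eq_zero, zero_add]
  | succ N ih =>
    have hd' : d - 1 + 1 = d := by omega
    have he1 : 1 ≤ (N + 1) ^ (d - 1) := Nat.one_le_iff_ne_zero.mpr (pow_ne_zero _ (by omega))
    set h : PowerSeries ℚ := 1 - (PowerSeries.X : PowerSeries ℚ) ^ (N + 1) with hh
    have hgeom := geom_mul (N + 1) (by omega)
    rw [← hh] at hgeom
    have hFsucc : F d (N + 1) = F d N * h ^ ((N + 1) ^ (d - 1)) := by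
      rw [F, F, Finset.prod_Icc_succ_top (by omega)]
    have hdh : d⁄dX ℚ h
        = PowerSeries.C (-(N + 1 : ℚ)) * (PowerSeries.X : PowerSeries ℚ) ^ N := by
      rw [hh, map_sub, Derivation.map_one_eq_zero, zero_sub, derivative_X_pow,
        PowerSeries.smul_eq_C_mul, Nat.add_sub_cancel, ← neg_mul, ← map_neg]
      push_cast
      ring
    have hdg : d⁄dX ℚ (h ^ ((N + 1) ^ (d - 1))) =
        PowerSeries.C ((((N + 1) ^ (d - 1) : ℕ) : ℚ) * (-(N + 1 : ℚ)))
          * (h ^ ((N + 1) ^ (d - 1) - 1) * (PowerSeries.X : PowerSeries ℚ) ^ N) := by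
      rw [Derivation.leibniz_pow, hdh, smul_eq_mul, nsmul_eq_mul,
        ← map_natCast (PowerSeries.C (R := ℚ)) ((N + 1) ^ (d - 1)), map_mul]
      ring
    have hCC : PowerSeries.C ((((N + 1) ^ d : ℕ)) : ℚ)
        = - PowerSeries.C ((((N + 1) ^ (d - 1) : ℕ) : ℚ) * (-(N + 1 : ℚ))) := by
      rw [← map_neg]
      congr 1
      push_cast
      rw [mul_neg, neg_neg, ← pow_succ, hd']
    have hpow : h ^ ((N + 1) ^ (d - 1))
        = h ^ ((N + 1) ^ (d - 1) - 1) * h := by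
      conv_lhs => rw [show (N + 1) ^ (d - 1) = ((N + 1) ^ (d - 1) - 1) + 1 by omega]
      rw [pow_succ]
    have hkey : h ^ ((N + 1) ^ (d - 1)) *
          (PowerSeries.C ((((N + 1) ^ d : ℕ)) : ℚ)
            * ((PowerSeries.X : PowerSeries ℚ) ^ N * geom (N + 1)))
        + d⁄dX ℚ (h ^ ((N + 1) ^ (d - 1))) = 0 := by
      rw [hdg, hCC]
      nth_rewrite 1 [hpow]
      linear_combination (-(PowerSeries.C ((((N + 1) ^ (d - 1) : ℕ) : ℚ) * (-(N + 1 : ℚ))))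
        * h ^ ((N + 1) ^ (d - 1) - 1) * (PowerSeries.X : PowerSeries ℚ) ^ N) * hgeom
    have hRs := Rs_succ d N
    rw [PowerSeries.smul_eq_C_mul] at hRs
    rw [hFsucc, Derivation.leibniz, smul_eq_mul, smul_eq_mul]
    linear_combination ih * (h ^ ((N + 1) ^ (d - 1))) + F d N * hkey
      + F d N * (h ^ ((N + 1) ^ (d - 1))) * hRs

lemma constantCoeff_L (d : ℕ) : PowerSeries.constantCoeff (L d) = 0 := by
  rw [← PowerSeries.coeff_zero_eq_constantCoeff]
  simp [L]

lemma coeff_pow_eq_zero {φ : PowerSeries ℚ} (h : PowerSeries.constantCoeff φ = 0)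
    {k n : ℕ} (hn : n < k) : PowerSeries.coeff n (φ ^ k) = 0 := by
  have hX : (PowerSeries.X : PowerSeries ℚ) ∣ φ := PowerSeries.X_dvd_iff.mpr h
  have h2 : (PowerSeries.X : PowerSeries ℚ) ^ k ∣ φ ^ k := pow_dvd_pow_of_dvd hX k
  exact PowerSeries.X_pow_dvd_iff.mp h2 n hn

lemma constantCoeff_E (d : ℕ) : PowerSeries.constantCoeff (E d) = 1 := by
  rw [← PowerSeries.coeff_zero_eq_constantCoeff]
  simp [E]

lemma derivative_E (d : ℕ) : d⁄dX ℚ (E d) = d⁄dX ℚ (L d) * E d := by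
  have hL0 : PowerSeries.constantCoeff (L d) = 0 := constantCoeff_L d
  ext n
  have hstep : ∀ k : ℕ, PowerSeries.coeff (n + 1) ((L d) ^ k) * ((n : ℚ) + 1)
      = k * PowerSeries.coeff n ((L d) ^ (k - 1) * d⁄dX ℚ (L d)) := by
    intro k
    rw [← PowerSeries.coeff_derivative, Derivation.leibniz_pow, smul_eq_mul, map_nsmul,
      nsmul_eq_mul]
  calc PowerSeries.coeff n (d⁄dX ℚ (E d))
      = ∑ k ∈ Finset.range (n + 2), ((Nat.factorial k : ℚ))⁻¹ *
          (PowerSeries.coeff (n + 1) ((L d) ^ k) * ((n : ℚ) + 1)) := by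
        rw [PowerSeries.coeff_derivative, E, PowerSeries.coeff_mk, Finset.sum_mul]
        simp [mul_assoc]
    _ = ∑ k ∈ Finset.range (n + 2), ((Nat.factorial k : ℚ))⁻¹ *
          ((k : ℚ) * PowerSeries.coeff n ((L d) ^ (k - 1) * d⁄dX ℚ (L d))) := by
        refine Finset.sum_congr rfl fun k _ => by rw [hstep]
    _ = ∑ j ∈ Finset.range (n + 1), ((Nat.factorial j : ℚ))⁻¹ *
          PowerSeries.coeff n ((L d) ^ j * d⁄dX ℚ (L d)) := by
        rw [Finset.sum_range_succ']
        simp only [Nat.cast_zero, zero_mul, mul_zero, add_zero]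
        refine Finset.sum_congr rfl fun j _ => ?_
        rw [Nat.add_sub_cancel, Nat.factorial_succ]
        have h1 : ((j : ℚ) + 1) ≠ 0 := by positivity
        have h2 : ((Nat.factorial j : ℚ)) ≠ 0 := by
          exact_mod_cast Nat.factorial_ne_zero j
        push_cast
        field_simp
    _ = PowerSeries.coeff n (d⁄dX ℚ (L d) * E d) := by
        have hE : ∀ p ∈ Finset.HasAntidiagonal.antidiagonal n,
            PowerSeries.coeff p.1 (d⁄dX ℚ (L d)) * PowerSeries.coeff p.2 (E d)
            = ∑ k ∈ Finset.range (n + 1), ((Nat.factorial k : ℚ))⁻¹ *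
                (PowerSeries.coeff p.1 (d⁄dX ℚ (L d))
                  * PowerSeries.coeff p.2 ((L d) ^ k)) := by
          intro p hp
          rw [E, PowerSeries.coeff_mk, Finset.mul_sum]
          rw [Finset.sum_subset (Finset.range_subset_range.mpr
            (by have := Finset.HasAntidiagonal.mem_antidiagonal.mp hp; omega : p.2 + 1 ≤ n + 1))]
          · exact Finset.sum_congr rfl fun k _ => by ring
          · intro k hk hk2
            rw [coeff_pow_eq_zero hL0, mul_zero, mul_zero]
            simp only [Finset.mem_range] at hk hk2
            omega
        rw [PowerSeries.coeff_mul, Finset.sum_congr rfl hE, Finset.sum_comm]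
        refine Finset.sum_congr rfl fun j _ => ?_
        rw [mul_comm ((L d) ^ j), PowerSeries.coeff_mul, Finset.mul_sum]

lemma constantCoeff_F (d N : ℕ) : PowerSeries.constantCoeff (F d N) = 1 := by
  rw [F, map_prod]
  apply Finset.prod_eq_one
  intro n hn
  rw [map_pow, map_sub, map_one, map_pow, PowerSeries.constantCoeff_X,
    zero_pow (by simp at hn; omega : n ≠ 0), sub_zero, one_pow]

lemma coeff_E_mul_F (d : ℕ) (hd : 1 ≤ d) (N k : ℕ) (hk : k ≤ N) :
    PowerSeries.coeff k (E d * F d N) = if k = 0 then 1 else 0 := by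
  have hdvd : (PowerSeries.X : PowerSeries ℚ) ^ N ∣ d⁄dX ℚ (E d * F d N) := by
    rw [Derivation.leibniz, smul_eq_mul, smul_eq_mul, derivative_E]
    have hre : E d * d⁄dX ℚ (F d N) + F d N * (d⁄dX ℚ (L d) * E d)
        = E d * (d⁄dX ℚ (F d N) + d⁄dX ℚ (L d) * F d N) := by ring
    rw [hre, keyA d hd N]
    exact Dvd.dvd.mul_left (Dvd.dvd.mul_left (X_pow_dvd_Rs d N) _) _
  rcases Nat.eq_zero_or_pos k with rfl | hk1
  · rw [if_pos rfl, PowerSeries.coeff_zero_eq_constantCoeff, map_mul, constantCoeff_E,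
      constantCoeff_F, one_mul]
  · rw [if_neg (by omega)]
    have h1 : PowerSeries.coeff (k - 1) (d⁄dX ℚ (E d * F d N)) = 0 :=
      PowerSeries.X_pow_dvd_iff.mp hdvd (k - 1) (by omega)
    rw [PowerSeries.coeff_derivative] at h1
    have h2 : (k - 1 : ℕ) + 1 = k := by omega
    rw [h2] at h1
    have h3 : (((k - 1 : ℕ) : ℚ) + 1) ≠ 0 := by positivity
    exact (mul_eq_zero.mp h1).resolve_right h3

/-- Convert a `Fin k`-tuple to a finsupp on `ℕ`. -/
def toFinsupp (k : ℕ) (m : Fin k → ℕ) : ℕ →₀ ℕ :=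
  Finsupp.onFinset (Finset.range k) (fun a => if h : a < k then m ⟨a, h⟩ else 0)
    (fun a ha => Finset.mem_range.mpr (by by_contra hc; exact ha (dif_neg hc)))

lemma toFinsupp_apply (k : ℕ) (m : Fin k → ℕ) (a : ℕ) :
    toFinsupp k m a = if h : a < k then m ⟨a, h⟩ else 0 := rfl

lemma coeff_pow_tuple (φ : PowerSeries ℚ) (k n : ℕ) :
    PowerSeries.coeff n (φ ^ k) =
      ∑ m ∈ Finset.Nat.antidiagonalTuple k n, ∏ i, PowerSeries.coeff (m i) φ := by
  rw [PowerSeries.coeff_pow]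
  refine Finset.sum_bij' (fun l _ => fun i : Fin k => l i.val)
    (fun m _ => toFinsupp k m) ?_ ?_ ?_ ?_ ?_
  · intro l hl
    rw [Finset.mem_finsuppAntidiag] at hl
    rw [Finset.Nat.mem_antidiagonalTuple, Fin.sum_univ_eq_sum_range (fun i => l i)]
    exact hl.1
  · intro m hm
    rw [Finset.Nat.mem_antidiagonalTuple] at hm
    rw [Finset.mem_finsuppAntidiag]
    refine ⟨?_, Finsupp.support_onFinset_subset⟩
    calc ∑ a ∈ Finset.range k, toFinsupp k m a
        = ∑ i : Fin k, toFinsupp k m i.val :=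
          (Fin.sum_univ_eq_sum_range (fun a => toFinsupp k m a) k).symm
      _ = ∑ i : Fin k, m i := Finset.sum_congr rfl fun i _ => by
          simp [toFinsupp_apply, i.isLt]
      _ = n := hm
  · intro l hl
    rw [Finset.mem_finsuppAntidiag] at hl
    ext a
    rw [toFinsupp_apply]
    by_cases h : a < k
    · rw [dif_pos h]
    · rw [dif_neg h]
      symm
      by_contra hc
      have hmem : a ∈ l.support := Finsupp.mem_support_iff.mpr hc
      exact h (Finset.mem_range.mp (hl.2 hmem))
  · intro m hm
    funext i
    simp only [toFinsupp_apply, i.isLt, dif_pos, Fin.eta]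
  · intro l hl
    rw [Fin.prod_univ_eq_prod_range (fun i => PowerSeries.coeff (l i) φ) k]

lemma uniqueness (d : ℕ) (hd : 1 ≤ d) (p : ℕ → ℚ)
    (hp : ∀ N k : ℕ, k ≤ N →
      (PowerSeries.coeff k) ((PowerSeries.mk p) * F d N) = if k = 0 then 1 else 0) :
    ∀ n, p n = PowerSeries.coeff n (E d) := by
  intro n
  induction n using Nat.strong_induction_on with
  | _ n ih =>
    have h1 := hp n n le_rfl
    have h2 := coeff_E_mul_F d hd n n le_rfl
    rw [← h2] at h1
    rw [PowerSeries.coeff_mul, PowerSeries.coeff_mul] at h1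
    have hmem : ((n, 0) : ℕ × ℕ) ∈ Finset.HasAntidiagonal.antidiagonal n := by simp
    rw [← Finset.add_sum_erase _ _ hmem, ← Finset.add_sum_erase _ _ hmem] at h1
    have hsum : ∑ q ∈ (Finset.HasAntidiagonal.antidiagonal n).erase (n, 0),
        PowerSeries.coeff q.1 (PowerSeries.mk p) * PowerSeries.coeff q.2 (F d n)
        = ∑ q ∈ (Finset.HasAntidiagonal.antidiagonal n).erase (n, 0),
            PowerSeries.coeff q.1 (E d) * PowerSeries.coeff q.2 (F d n) := by
      refine Finset.sum_congr rfl fun q hq => ?_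
      have h' := Finset.HasAntidiagonal.mem_antidiagonal.mp (Finset.mem_of_mem_erase hq)
      have hne := Finset.ne_of_mem_erase hq
      have hq1 : q.1 < n := by
        rcases Nat.lt_or_ge q.1 n with h | h
        · exact h
        · exfalso
          apply hne
          have ha : q.1 = n := by omega
          have hb : q.2 = 0 := by omega
          ext <;> simp [ha, hb]
      rw [PowerSeries.coeff_mk, ih q.1 hq1]
    rw [hsum] at h1
    have h3 := add_right_cancel h1
    have hF0 : PowerSeries.coeff (0 : ℕ) (F d n) = 1 := by
      rw [PowerSeries.coeff_zero_eq_constantCoeff, constantCoeff_F]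
    rw [hF0, mul_one, mul_one, PowerSeries.coeff_mk] at h3
    exact h3

lemma sigma_form (d n : ℕ) (hn : 1 ≤ n) :
    PowerSeries.coeff n (E d) = ∑ k ∈ Finset.Icc 1 n, (1 / (Nat.factorial k : ℚ)) *
      ∑ m ∈ (Finset.Nat.antidiagonalTuple k n).filter (fun m => ∀ i, 1 ≤ m i),
        (∏ i, ((∑ t ∈ (m i).divisors, t ^ d : ℕ) : ℚ)) / (∏ i, (m i : ℚ)) := by
  rw [E, PowerSeries.coeff_mk]
  have hins : Finset.range (n + 1) = insert 0 (Finset.Icc 1 n) := by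
    ext a
    simp only [Finset.mem_range, Finset.mem_insert, Finset.mem_Icc]
    omega
  rw [hins, Finset.sum_insert (by simp)]
  have h0 : ((Nat.factorial 0 : ℚ))⁻¹ * PowerSeries.coeff n ((L d) ^ 0) = 0 := by
    have : n ≠ 0 := by omega
    simp [PowerSeries.coeff_one, this]
  rw [h0, zero_add]
  refine Finset.sum_congr rfl fun k hk => ?_
  rw [coeff_pow_tuple, one_div]
  congr 1
  rw [← Finset.sum_filter_add_sum_filter_not (Finset.Nat.antidiagonalTuple k n)
    (fun m => ∀ i, 1 ≤ m i)]
  have hzero : ∑ m ∈ (Finset.Nat.antidiagonalTuple k n).filter (fun m => ¬ ∀ i, 1 ≤ m i),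
      ∏ i, PowerSeries.coeff (m i) (L d) = 0 := by
    apply Finset.sum_eq_zero
    intro m hm
    rw [Finset.mem_filter] at hm
    push_neg at hm
    obtain ⟨i, hi⟩ := hm.2
    apply Finset.prod_eq_zero (Finset.mem_univ i)
    have hmi : m i = 0 := by omega
    rw [hmi]
    simp [L]
  rw [hzero, add_zero]
  refine Finset.sum_congr rfl fun m hm => ?_
  rw [Finset.mem_filter] at hm
  rw [← Finset.prod_div_distrib]
  refine Finset.prod_congr rfl fun i _ => ?_
  have hmi : m i ≠ 0 := by have := hm.2 i; omega
  simp [L, hmi]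

end PdAux

end

/-- `p : ℕ → ℚ` is the coefficient sequence of `∏_{n≥1} (1-q^n)^{-n^(d-1)}`:
for every `N`, multiplying the series `∑ p(n) qⁿ` by the partial product
`∏_{n=1}^{N} (1-qⁿ)^(n^(d-1))` gives a series agreeing with `1` up to order `N`. -/
def IsPdSeries (d : ℕ) (p : ℕ → ℚ) : Prop :=
  ∀ N k : ℕ, k ≤ N →
    (PowerSeries.coeff k) ((PowerSeries.mk p) *
      ∏ n ∈ Finset.Icc 1 N, (1 - (PowerSeries.X : PowerSeries ℚ) ^ n) ^ (n ^ (d - 1))) =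
    if k = 0 then 1 else 0

/-- The coefficients of `∏ (1-qⁿ)^(-n^(d-1))` are given by
`p_d(n) = ∑_{k ≤ n} (1/k!) ∑_{m₁+⋯+m_k=n, mᵢ≥1} σ_d(m₁)⋯σ_d(m_k)/(m₁⋯m_k)`. -/
theorem pd_eq_sigma_sum (d : ℕ) (hd : 1 ≤ d) (p : ℕ → ℚ) (hp : IsPdSeries d p)
    (n : ℕ) (hn : 1 ≤ n) :
    p n = ∑ k ∈ Finset.Icc 1 n, (1 / (Nat.factorial k : ℚ)) *
      ∑ m ∈ (Finset.Nat.antidiagonalTuple k n).filter (fun m => ∀ i, 1 ≤ m i),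
        (∏ i, ((∑ t ∈ (m i).divisors, t ^ d : ℕ) : ℚ)) / (∏ i, (m i : ℚ)) := by
  have h := PdAux.uniqueness d hd p (fun N k hk => hp N k hk)
  rw [h n, PdAux.sigma_form d n hn]
end

section
/- For n ≥ 2 with n ≡ 0 (mod 3) and d ≥ 1, the coefficients p_d(n) satisfy 3^{(d-1)n/3}/(n/3)! < p_d(n) ≤ 3^{(d-1)n/3}·p(n), where p(n) = p_1(n) is the ordinary partition function. -/
open PowerSeries Finset

namespace PdAux


noncomputable def B (k a : ℕ) : PowerSeries ℚ :=
  PowerSeries.mk fun m => if k ∣ m then ((m / k + a - 1).choose (m / k) : ℚ) else 0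

lemma coeff_B (k a m : ℕ) :
    coeff m (B k a) = if k ∣ m then ((m / k + a - 1).choose (m / k) : ℚ) else 0 :=
  coeff_mk m _

lemma B_step (k a : ℕ) (hk : 1 ≤ k) : B k (a + 1) * (1 - X ^ k) = B k a := by
  ext m
  rw [mul_sub, mul_one, map_sub, coeff_mul_X_pow']
  simp only [coeff_B]
  by_cases hdvd : k ∣ m
  · obtain ⟨c, rfl⟩ := hdvd
    have hdiv : k * c / k = c := Nat.mul_div_cancel_left _ (by omega)
    rw [if_pos (dvd_mul_right k c), hdiv]
    cases c with
    | zero =>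
      rw [mul_zero, if_neg (show ¬ k ≤ 0 by omega)]
      simp
    | succ j =>
      have hle : k ≤ k * (j + 1) := by nlinarith
      rw [if_pos hle]
      have he : k * (j + 1) - k = k * j := by ring_nf; omega
      rw [he, if_pos (dvd_mul_right k j), Nat.mul_div_cancel_left _ (by omega),
        if_pos (dvd_mul_right k (j + 1))]
      have e1 : j + 1 + (a + 1) - 1 = j + a + 1 := by omega
      have e2 : j + (a + 1) - 1 = j + a := by omega
      have e3 : j + 1 + a - 1 = j + a := by omega
      rw [e1, e2, e3, Nat.choose_succ_succ (j + a) j]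
      push_cast
      ring
  · rw [if_neg hdvd, if_neg hdvd]
    by_cases hle : k ≤ m
    · rw [if_pos hle, if_neg (fun hd => hdvd (by
        have h2 : m = (m - k) + k := by omega
        rw [h2]; exact Nat.dvd_add hd (dvd_refl k)))]
      simp
    · rw [if_neg hle]; simp

lemma B_zero (k : ℕ) (hk : 1 ≤ k) : B k 0 = 1 := by
  ext m
  rw [coeff_B, PowerSeries.coeff_one]
  by_cases hm : m = 0
  · subst hm; simp
  · rw [if_neg hm]
    by_cases hdvd : k ∣ m
    · rw [if_pos hdvd]
      have h1 : 1 ≤ m / k := (Nat.one_le_div_iff (by omega)).2 (Nat.le_of_dvd (by omega) hdvd)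
      rw [Nat.choose_eq_zero_of_lt (by omega)]
      simp
    · rw [if_neg hdvd]

lemma B_mul_pow (k a : ℕ) (hk : 1 ≤ k) : B k a * (1 - X ^ k) ^ a = 1 := by
  induction a with
  | zero => rw [pow_zero, mul_one, B_zero k hk]
  | succ a ih =>
    rw [pow_succ', ← mul_assoc, B_step k a hk, ih]



lemma coeff_eq_of_mul (F f g : PowerSeries ℚ) (hF : constantCoeff F ≠ 0) (N : ℕ)
    (h : ∀ k ≤ N, coeff k (f * F) = coeff k (g * F)) :
    ∀ k ≤ N, coeff k f = coeff k g := by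
  intro k hk
  have h1 : f = f * F * F⁻¹ := by rw [mul_assoc, PowerSeries.mul_inv_cancel F hF, mul_one]
  have h2 : g = g * F * F⁻¹ := by rw [mul_assoc, PowerSeries.mul_inv_cancel F hF, mul_one]
  rw [h1, h2, PowerSeries.coeff_mul, PowerSeries.coeff_mul]
  apply Finset.sum_congr rfl
  intro x hx
  rw [Finset.HasAntidiagonal.mem_antidiagonal] at hx
  rw [h x.1 (by omega)]

noncomputable def Q (d N : ℕ) : PowerSeries ℚ := ∏ k ∈ Icc 1 N, B k (k ^ (d - 1))

lemma Q_mul : ∀ d N : ℕ, Q d N *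
    (∏ k ∈ Icc 1 N, (1 - (X : PowerSeries ℚ) ^ k) ^ (k ^ (d - 1))) = 1 := by
  intro d N
  rw [Q, ← Finset.prod_mul_distrib]
  apply Finset.prod_eq_one
  intro k hk
  rw [Finset.mem_Icc] at hk
  exact B_mul_pow k _ hk.1

lemma p_eq (d : ℕ) (p : ℕ → ℚ)
    (hp : ∀ N k : ℕ, k ≤ N →
      (PowerSeries.coeff k) ((PowerSeries.mk p) *
        ∏ n ∈ Finset.Icc 1 N, (1 - (PowerSeries.X : PowerSeries ℚ) ^ n) ^ (n ^ (d - 1))) =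
      if k = 0 then 1 else 0) (n : ℕ) :
    p n = ∑ ℓ ∈ finsuppAntidiag (Icc 1 n) n,
      ∏ k ∈ Icc 1 n, (if k ∣ ℓ k then (((ℓ k) / k + k ^ (d - 1) - 1).choose ((ℓ k) / k) : ℚ) else 0) := by
  set F := ∏ k ∈ Icc 1 n, (1 - (X : PowerSeries ℚ) ^ k) ^ (k ^ (d - 1)) with hF
  have hQF : Q d n * F = 1 := Q_mul d n
  have hcF : constantCoeff F ≠ 0 := by
    intro hc
    have := congrArg (constantCoeff) hQF
    rw [map_mul, hc, mul_zero] at this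
    simp at this
  have key : coeff n (mk p) = coeff n (Q d n) := by
    refine coeff_eq_of_mul F (mk p) (Q d n) hcF n ?_ n le_rfl
    intro k hk
    rw [hp n k hk, hQF, PowerSeries.coeff_one]
  rw [← coeff_mk n p, key, Q, PowerSeries.coeff_prod]
  apply Finset.sum_congr rfl
  intro ℓ _
  apply Finset.prod_congr rfl
  intro k _
  rw [coeff_B]



lemma choose_le_pow (a : ℕ) (ha : 1 ≤ a) : ∀ m : ℕ, (m + a - 1).choose m ≤ a ^ m := by
  intro m
  induction m with
  | zero => simp
  | succ m ih =>
    have h := Nat.add_one_mul_choose_eq (m + a - 1) m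
    have hs : m + a - 1 + 1 = m + a := by omega
    rw [hs] at h
    have h2 : (m + a).choose (m + 1) * (m + 1) ≤ a ^ (m + 1) * (m + 1) := by
      calc (m + a).choose (m + 1) * (m + 1) = (m + a) * (m + a - 1).choose m := by
            rw [← h]
        _ ≤ ((m + 1) * a) * a ^ m := by
            apply Nat.mul_le_mul _ ih
            nlinarith
        _ = a ^ (m + 1) * (m + 1) := by ring
    have h3 : m + 1 + a - 1 = m + a := by omega
    rw [h3]
    exact Nat.le_of_mul_le_mul_right h2 (by omega)

lemma pow_le_fac_mul_choose (a : ℕ) (ha : 1 ≤ a) :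
    ∀ m : ℕ, a ^ m ≤ m.factorial * ((m + a - 1).choose m) := by
  intro m
  induction m with
  | zero => simp
  | succ m ih =>
    have h := Nat.add_one_mul_choose_eq (m + a - 1) m
    have hs : m + a - 1 + 1 = m + a := by omega
    rw [hs] at h
    have h3 : m + 1 + a - 1 = m + a := by omega
    rw [h3]
    calc a ^ (m + 1) = a * a ^ m := by ring
      _ ≤ (m + a) * (m.factorial * ((m + a - 1).choose m)) :=
          Nat.mul_le_mul (by omega) ih
      _ = m.factorial * ((m + a) * (m + a - 1).choose m) := by ring
      _ = m.factorial * ((m + a).choose (m + 1) * (m + 1)) := by rw [← h]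
      _ = (m + 1).factorial * (m + a).choose (m + 1) := by
          rw [Nat.factorial_succ]; ring

lemma cube_le_three_pow : ∀ k : ℕ, k ^ 3 ≤ 3 ^ k := by
  intro k
  induction k with
  | zero => norm_num
  | succ k ih =>
    rcases Nat.lt_or_ge k 3 with h | h
    · interval_cases k <;> norm_num
    · have h1 : 3 * k ^ 2 ≤ k ^ 3 := by nlinarith
      have h2 : 3 * k + 1 ≤ k ^ 3 := by nlinarith
      calc (k + 1) ^ 3 ≤ 3 * k ^ 3 := by nlinarith
        _ ≤ 3 * 3 ^ k := by omega
        _ = 3 ^ (k + 1) := by ring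

lemma prod_parts_le (n : ℕ) (h3 : n % 3 = 0) (s : Finset ℕ) (m : ℕ → ℕ)
    (hsum : ∑ k ∈ s, k * m k = n) :
    ∏ k ∈ s, k ^ m k ≤ 3 ^ (n / 3) := by
  have key : (∏ k ∈ s, k ^ m k) ^ 3 ≤ (3 ^ (n / 3)) ^ 3 := by
    calc (∏ k ∈ s, k ^ m k) ^ 3 = ∏ k ∈ s, (k ^ 3) ^ m k := by
          rw [← Finset.prod_pow]
          apply Finset.prod_congr rfl
          intro k _
          rw [← pow_mul, ← pow_mul, Nat.mul_comm]
      _ ≤ ∏ k ∈ s, (3 ^ k) ^ m k := by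
          apply Finset.prod_le_prod
          · intro i _; positivity
          · intro i _
            exact Nat.pow_le_pow_left (cube_le_three_pow i) _
      _ = 3 ^ (∑ k ∈ s, k * m k) := by
          rw [← Finset.prod_pow_eq_pow_sum]
          apply Finset.prod_congr rfl
          intro k _
          rw [← pow_mul]
      _ = (3 ^ (n / 3)) ^ 3 := by
          rw [← pow_mul, hsum]
          congr 1
          omega
  exact (Nat.pow_le_pow_iff_left (by omega)).1 key



/-- The multiset of parts encoded by `ℓ` (part `k` with multiplicity `ℓ k / k`). -/
def M (n : ℕ) (ℓ : ℕ →₀ ℕ) : Multiset ℕ :=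
  ∑ k ∈ Icc 1 n, Multiset.replicate (ℓ k / k) k

lemma count_M (n : ℕ) (ℓ : ℕ →₀ ℕ) (k : ℕ) (hk : k ∈ Icc 1 n) :
    (M n ℓ).count k = ℓ k / k := by
  rw [M, Multiset.count_sum']
  rw [Finset.sum_eq_single_of_mem k hk]
  · rw [Multiset.count_replicate_self]
  · intro j _ hj
    rw [Multiset.count_replicate, if_neg hj]

lemma sum_M (n : ℕ) (ℓ : ℕ →₀ ℕ) (hdvd : ∀ k ∈ Icc 1 n, k ∣ ℓ k)
    (hsum : ∑ k ∈ Icc 1 n, ℓ k = n) : (M n ℓ).sum = n := by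
  rw [M, show (Multiset.sum : Multiset ℕ → ℕ) = Multiset.sumAddMonoidHom from rfl,
    map_sum]
  have hcong : ∀ k ∈ Icc 1 n,
      (Multiset.sumAddMonoidHom : Multiset ℕ →+ ℕ) (Multiset.replicate (ℓ k / k) k) = ℓ k := by
    intro k hk
    rw [show (Multiset.sumAddMonoidHom : Multiset ℕ →+ ℕ) (Multiset.replicate (ℓ k / k) k)
        = (Multiset.replicate (ℓ k / k) k).sum from rfl,
      Multiset.sum_replicate, smul_eq_mul, Nat.div_mul_cancel (hdvd k hk)]
  rw [Finset.sum_congr rfl hcong, hsum]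

lemma pos_M (n : ℕ) (ℓ : ℕ →₀ ℕ) {x : ℕ} (hx : x ∈ M n ℓ) : 0 < x := by
  rw [M, Multiset.mem_sum] at hx
  obtain ⟨k, hk, hxk⟩ := hx
  rw [Multiset.eq_of_mem_replicate hxk]
  rw [Finset.mem_Icc] at hk
  omega

/-- Map an admissible `ℓ` to the corresponding partition of `n`. -/
noncomputable def toPart (n : ℕ) (ℓ : ℕ →₀ ℕ) : Nat.Partition n :=
  if h : (M n ℓ).sum = n then Nat.Partition.ofSums n (M n ℓ) h else default

lemma toPart_parts (n : ℕ) (ℓ : ℕ →₀ ℕ) (hdvd : ∀ k ∈ Icc 1 n, k ∣ ℓ k)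
    (hsum : ∑ k ∈ Icc 1 n, ℓ k = n) : (toPart n ℓ).parts = M n ℓ := by
  rw [toPart, dif_pos (sum_M n ℓ hdvd hsum), Nat.Partition.ofSums_parts]
  exact Multiset.filter_eq_self.2 fun a ha => by
    have := pos_M n ℓ ha
    simp only [ne_eq]
    omega

lemma toPart_injOn (n : ℕ) (ℓ ℓ' : ℕ →₀ ℕ)
    (h1 : ℓ ∈ finsuppAntidiag (Icc 1 n) n) (h2 : ℓ' ∈ finsuppAntidiag (Icc 1 n) n)
    (hdvd : ∀ k ∈ Icc 1 n, k ∣ ℓ k) (hdvd' : ∀ k ∈ Icc 1 n, k ∣ ℓ' k)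
    (heq : toPart n ℓ = toPart n ℓ') : ℓ = ℓ' := by
  rw [Finset.mem_finsuppAntidiag] at h1 h2
  have hM : M n ℓ = M n ℓ' := by
    rw [← toPart_parts n ℓ hdvd h1.1, ← toPart_parts n ℓ' hdvd' h2.1, heq]
  ext k
  by_cases hk : k ∈ Icc 1 n
  · have := congrArg (Multiset.count k) hM
    rw [count_M n ℓ k hk, count_M n ℓ' k hk] at this
    rw [← Nat.div_mul_cancel (hdvd k hk), ← Nat.div_mul_cancel (hdvd' k hk), this]
  · rw [Finsupp.notMem_support_iff.1 (fun hs => hk (h1.2 hs)),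
      Finsupp.notMem_support_iff.1 (fun hs => hk (h2.2 hs))]


/-- the weight of part `k` with total `m` -/
noncomputable def w (d k m : ℕ) : ℚ :=
  if k ∣ m then ((m / k + k ^ (d - 1) - 1).choose (m / k) : ℚ) else 0

lemma w_nonneg (d k m : ℕ) : 0 ≤ w d k m := by
  rw [w]; split
  · positivity
  · exact le_refl 0

lemma w_zero (d k : ℕ) : w d k 0 = 1 := by
  rw [w, if_pos (dvd_zero k), Nat.zero_div, Nat.choose_zero_right, Nat.cast_one]

/-- the term of the coefficient sum attached to `ℓ` -/
noncomputable def t (d n : ℕ) (ℓ : ℕ →₀ ℕ) : ℚ := ∏ k ∈ Icc 1 n, w d k (ℓ k)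

lemma t_nonneg (d n : ℕ) (ℓ : ℕ →₀ ℕ) : 0 ≤ t d n ℓ :=
  Finset.prod_nonneg fun k _ => w_nonneg d k (ℓ k)

lemma dvd_of_t_ne_zero {d n : ℕ} {ℓ : ℕ →₀ ℕ} (h : t d n ℓ ≠ 0) :
    ∀ k ∈ Icc 1 n, k ∣ ℓ k := by
  intro k hk
  have h2 := Finset.prod_ne_zero_iff.1 h k hk
  rw [w] at h2
  by_contra hdvd
  rw [if_neg hdvd] at h2
  exact h2 rfl

lemma p_eq' (d : ℕ) (p : ℕ → ℚ)
    (hp : ∀ N k : ℕ, k ≤ N →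
      (PowerSeries.coeff k) ((PowerSeries.mk p) *
        ∏ n ∈ Finset.Icc 1 N, (1 - (PowerSeries.X : PowerSeries ℚ) ^ n) ^ (n ^ (d - 1))) =
      if k = 0 then 1 else 0) (n : ℕ) :
    p n = ∑ ℓ ∈ finsuppAntidiag (Icc 1 n) n, t d n ℓ :=
  p_eq d p hp n

/-- The lower bound. -/
lemma lower (d n : ℕ) (hn3 : 3 ≤ n) (h3 : n % 3 = 0) :
    (3 : ℚ) ^ ((d - 1) * (n / 3)) / (Nat.factorial (n / 3) : ℚ) <
      ∑ ℓ ∈ finsuppAntidiag (Icc 1 n) n, t d n ℓ := by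
  set ℓ0 : ℕ →₀ ℕ := Finsupp.single 3 n with hℓ0
  set ℓ1 : ℕ →₀ ℕ := Finsupp.single 1 n with hℓ1
  have h3mem : (3 : ℕ) ∈ Icc 1 n := Finset.mem_Icc.2 ⟨by omega, hn3⟩
  have h1mem : (1 : ℕ) ∈ Icc 1 n := Finset.mem_Icc.2 ⟨le_refl 1, by omega⟩
  have hmem : ∀ (j : ℕ), j ∈ Icc 1 n → Finsupp.single j n ∈ finsuppAntidiag (Icc 1 n) n := by
    intro j hj
    rw [Finset.mem_finsuppAntidiag]
    constructor
    · rw [Finset.sum_eq_single_of_mem j hj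
        (fun b _ hb => Finsupp.single_eq_of_ne' (Ne.symm hb)), Finsupp.single_eq_same]
    · exact subset_trans Finsupp.support_single_subset
        (Finset.singleton_subset_iff.2 hj)
  have hne : ℓ0 ≠ ℓ1 := by
    intro h
    have := congrArg (fun f : ℕ →₀ ℕ => f 3) h
    simp only [hℓ0, hℓ1, Finsupp.single_eq_same] at this
    rw [Finsupp.single_eq_of_ne' (by norm_num)] at this
    omega
  have ht0 : t d n ℓ0 = ((n / 3 + 3 ^ (d - 1) - 1).choose (n / 3) : ℚ) := by
    rw [t, Finset.prod_eq_single_of_mem 3 h3mem]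
    · rw [hℓ0, Finsupp.single_eq_same, w, if_pos (Nat.dvd_of_mod_eq_zero h3)]
    · intro b _ hb
      rw [hℓ0, Finsupp.single_eq_of_ne' (Ne.symm hb), w_zero]
  have ht1 : t d n ℓ1 = 1 := by
    rw [t, Finset.prod_eq_single_of_mem 1 h1mem]
    · rw [hℓ1, Finsupp.single_eq_same, w, if_pos (one_dvd n), Nat.div_one, one_pow]
      norm_num
    · intro b _ hb
      rw [hℓ1, Finsupp.single_eq_of_ne' (Ne.symm hb), w_zero]
  have hsub : ({ℓ0, ℓ1} : Finset (ℕ →₀ ℕ)) ⊆ finsuppAntidiag (Icc 1 n) n := by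
    intro x hx
    rw [Finset.mem_insert, Finset.mem_singleton] at hx
    rcases hx with rfl | rfl
    · exact hmem 3 h3mem
    · exact hmem 1 h1mem
  have hge : t d n ℓ0 + t d n ℓ1 ≤ ∑ ℓ ∈ finsuppAntidiag (Icc 1 n) n, t d n ℓ := by
    rw [← Finset.sum_pair hne]
    exact Finset.sum_le_sum_of_subset_of_nonneg hsub fun i _ _ => t_nonneg d n i
  refine lt_of_lt_of_le ?_ hge
  rw [ht0, ht1]
  rw [div_lt_iff₀ (by positivity)]
  have hkey : 3 ^ ((d - 1) * (n / 3)) <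
      ((n / 3 + 3 ^ (d - 1) - 1).choose (n / 3) + 1) * Nat.factorial (n / 3) := by
    have h1 : (3 : ℕ) ^ ((d - 1) * (n / 3)) = (3 ^ (d - 1)) ^ (n / 3) := by
      rw [pow_mul]
    have h2 := pow_le_fac_mul_choose (3 ^ (d - 1)) (Nat.one_le_pow _ _ (by omega)) (n / 3)
    have h3 : 1 ≤ Nat.factorial (n / 3) := Nat.one_le_iff_ne_zero.2 (Nat.factorial_ne_zero _)
    calc (3 : ℕ) ^ ((d - 1) * (n / 3))
        = (3 ^ (d - 1)) ^ (n / 3) := h1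
      _ ≤ Nat.factorial (n / 3) * ((n / 3 + 3 ^ (d - 1) - 1).choose (n / 3)) := h2
      _ < Nat.factorial (n / 3) * ((n / 3 + 3 ^ (d - 1) - 1).choose (n / 3))
          + Nat.factorial (n / 3) := by omega
      _ = ((n / 3 + 3 ^ (d - 1) - 1).choose (n / 3) + 1) * Nat.factorial (n / 3) := by ring
  calc (3 : ℚ) ^ ((d - 1) * (n / 3)) = ((3 ^ ((d - 1) * (n / 3)) : ℕ) : ℚ) := by push_cast; ring
    _ < ((((n / 3 + 3 ^ (d - 1) - 1).choose (n / 3) + 1) * Nat.factorial (n / 3) : ℕ) : ℚ) := by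
        exact_mod_cast hkey
    _ = ((n / 3 + 3 ^ (d - 1) - 1).choose (n / 3) + 1) * (Nat.factorial (n / 3) : ℚ) := by
        push_cast; ring

/-- termwise bound. -/
lemma t_le (d n : ℕ) (h3 : n % 3 = 0) (ℓ : ℕ →₀ ℕ)
    (hmem : ℓ ∈ finsuppAntidiag (Icc 1 n) n) (hne : t d n ℓ ≠ 0) :
    t d n ℓ ≤ (3 : ℚ) ^ ((d - 1) * (n / 3)) := by
  have hdvd := dvd_of_t_ne_zero hne
  rw [Finset.mem_finsuppAntidiag] at hmem
  have hsum' : ∑ k ∈ Icc 1 n, k * (ℓ k / k) = n :=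
    calc ∑ k ∈ Icc 1 n, k * (ℓ k / k) = ∑ k ∈ Icc 1 n, ℓ k :=
        Finset.sum_congr rfl fun k hk => Nat.mul_div_cancel' (hdvd k hk)
      _ = n := hmem.1
  have hN : ∏ k ∈ Icc 1 n, (k ^ (d - 1)) ^ (ℓ k / k) ≤ 3 ^ ((d - 1) * (n / 3)) := by
    calc ∏ k ∈ Icc 1 n, (k ^ (d - 1)) ^ (ℓ k / k)
        = (∏ k ∈ Icc 1 n, k ^ (ℓ k / k)) ^ (d - 1) := by
          rw [← Finset.prod_pow]
          exact Finset.prod_congr rfl fun k _ => by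
            rw [← pow_mul, ← pow_mul, Nat.mul_comm]
      _ ≤ (3 ^ (n / 3)) ^ (d - 1) :=
          Nat.pow_le_pow_left (prod_parts_le n h3 (Icc 1 n) (fun k => ℓ k / k) hsum') _
      _ = 3 ^ ((d - 1) * (n / 3)) := by rw [← pow_mul, Nat.mul_comm]
  calc t d n ℓ = ∏ k ∈ Icc 1 n, (((ℓ k / k + k ^ (d - 1) - 1).choose (ℓ k / k) : ℕ) : ℚ) := by
        exact Finset.prod_congr rfl fun k hk => by rw [w, if_pos (hdvd k hk)]
    _ ≤ ∏ k ∈ Icc 1 n, (((k ^ (d - 1)) ^ (ℓ k / k) : ℕ) : ℚ) := by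
        apply Finset.prod_le_prod
        · intro k _; positivity
        · intro k hk
          have hk1 : 1 ≤ k := (Finset.mem_Icc.1 hk).1
          exact_mod_cast choose_le_pow (k ^ (d - 1)) (Nat.one_le_pow _ _ (by omega)) (ℓ k / k)
    _ = ((∏ k ∈ Icc 1 n, (k ^ (d - 1)) ^ (ℓ k / k) : ℕ) : ℚ) := by rw [Nat.cast_prod]
    _ ≤ ((3 ^ ((d - 1) * (n / 3)) : ℕ) : ℚ) := by exact_mod_cast hN
    _ = (3 : ℚ) ^ ((d - 1) * (n / 3)) := by push_cast; ring

/-- The upper bound. -/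
lemma upper (d n : ℕ) (hn3 : 3 ≤ n) (h3 : n % 3 = 0) :
    ∑ ℓ ∈ finsuppAntidiag (Icc 1 n) n, t d n ℓ ≤
      (3 : ℚ) ^ ((d - 1) * (n / 3)) * (Fintype.card (Nat.Partition n) : ℚ) := by
  rw [← Finset.sum_filter_ne_zero (finsuppAntidiag (Icc 1 n) n)]
  set S' := (finsuppAntidiag (Icc 1 n) n).filter (fun ℓ => t d n ℓ ≠ 0) with hS'
  have hcard : S'.card ≤ Fintype.card (Nat.Partition n) := by
    rw [← Finset.card_univ]
    apply Finset.card_le_card_of_injOn (toPart n) (fun _ _ => Finset.mem_univ _)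
    intro ℓ hℓ ℓ' hℓ' heq
    rw [Finset.mem_coe, hS', Finset.mem_filter] at hℓ hℓ'
    exact toPart_injOn n ℓ ℓ' hℓ.1 hℓ'.1 (dvd_of_t_ne_zero hℓ.2) (dvd_of_t_ne_zero hℓ'.2) heq
  calc ∑ ℓ ∈ S', t d n ℓ ≤ S'.card • ((3 : ℚ) ^ ((d - 1) * (n / 3))) := by
        apply Finset.sum_le_card_nsmul
        intro ℓ hℓ
        rw [hS', Finset.mem_filter] at hℓ
        exact t_le d n h3 ℓ hℓ.1 hℓ.2
    _ = (S'.card : ℚ) * (3 : ℚ) ^ ((d - 1) * (n / 3)) := by rw [nsmul_eq_mul]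
    _ ≤ (Fintype.card (Nat.Partition n) : ℚ) * (3 : ℚ) ^ ((d - 1) * (n / 3)) := by
        apply mul_le_mul_of_nonneg_right _ (by positivity)
        exact_mod_cast hcard
    _ = (3 : ℚ) ^ ((d - 1) * (n / 3)) * (Fintype.card (Nat.Partition n) : ℚ) := by ring

end PdAux

open PowerSeries Finset

/-- Bounds for `p_d(n)` when `n ≡ 0 (mod 3)`. -/
theorem pd_bounds_mod_zero (d : ℕ) (hd : 1 ≤ d) (p : ℕ → ℚ) (hp : IsPdSeries d p)
    (n : ℕ) (hn : 2 ≤ n) (h3 : n % 3 = 0) :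
    (3 : ℚ) ^ ((d - 1) * (n / 3)) / (Nat.factorial (n / 3) : ℚ) < p n ∧
    p n ≤ (3 : ℚ) ^ ((d - 1) * (n / 3)) * (Fintype.card (Nat.Partition n) : ℚ) := by
  have hn3 : 3 ≤ n := by omega
  have hpe := PdAux.p_eq' d p hp n
  rw [hpe]
  exact ⟨PdAux.lower d n hn3 h3, PdAux.upper d n hn3 h3⟩
end

section
/- For n ≥ 2 with n ≡ 1 (mod 3) and d ≥ 1, the coefficients p_d(n) satisfy 3·(4·3^{(n-4)/3})^{d-1}/(2·((n-4)/3)!) < p_d(n) ≤ (4·3^{(n-4)/3})^{d-1}·p(n). -/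
open PowerSeries Finset
noncomputable def S (j : ℕ) : PowerSeries ℚ := PowerSeries.mk fun i => if j ∣ i then 1 else 0

lemma S_mul (j : ℕ) (hj : 1 ≤ j) : S j * (1 - X ^ j) = 1 := by
  ext k
  rw [mul_sub, mul_one, map_sub]
  rw [coeff_mul_X_pow']
  simp only [S, coeff_mk, coeff_one]
  rcases Nat.eq_zero_or_pos k with rfl | hk
  · have : ¬ j ≤ 0 := by omega
    simp [this]
  · by_cases hjk : j ≤ k
    · have hiff : j ∣ k ↔ j ∣ k - j := by
        constructor
        · intro h; exact (Nat.dvd_sub h dvd_rfl)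
        · intro h; have := Nat.dvd_add h dvd_rfl; rwa [Nat.sub_add_cancel hjk] at this
      simp only [hjk, if_true, hk.ne', if_false]
      by_cases h2 : j ∣ k
      · simp [h2, hiff.mp h2]
      · have h3 : ¬ j ∣ k - j := fun h => h2 (hiff.mpr h)
        simp [h2, h3]
    · have hnd : ¬ j ∣ k := fun h => hjk (Nat.le_of_dvd hk h)
      simp [hjk, hnd, hk.ne']


lemma hockey (a m : ℕ) : ∑ t ∈ range (m+1), (a + t).choose t = (a + m + 1).choose m := by
  induction m with
  | zero => simp
  | succ m ih =>
    rw [Finset.sum_range_succ, ih]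
    have h1 : a + (m+1) = (a + m) + 1 := by ring
    rw [h1]
    exact (Nat.choose_succ_succ _ _).symm

lemma coeff_S_pow (j : ℕ) (hj : 1 ≤ j) (a : ℕ) (ha : 1 ≤ a) (i : ℕ) :
    PowerSeries.coeff i ((S j)^a) =
      if j ∣ i then (((a - 1 + i / j).choose (i / j) : ℕ) : ℚ) else 0 := by
  induction a, ha using Nat.le_induction generalizing i with
  | base =>
    simp only [pow_one, S, coeff_mk, Nat.sub_self, Nat.zero_add, Nat.choose_self]
    split <;> simp
  | succ a ha ih =>
    rw [pow_succ, PowerSeries.coeff_mul, Finset.Nat.sum_antidiagonal_eq_sum_range_succ_mk]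
    by_cases h : j ∣ i
    · obtain ⟨m, rfl⟩ := h
      rw [if_pos (Dvd.intro m rfl), Nat.mul_div_cancel_left m (by omega)]
      have key : ∑ k ∈ range (j * m + 1),
          PowerSeries.coeff k ((S j)^a) * PowerSeries.coeff (j * m - k) (S j)
          = ∑ t ∈ range (m + 1), (((a - 1 + t).choose t : ℕ) : ℚ) := by
        rw [← Finset.sum_filter_of_ne (p := fun k => j ∣ k)
          (by
            intro k hk hne
            by_contra hnd
            rw [ih k] at hne
            simp [hnd] at hne)]
        apply Finset.sum_nbij' (fun k => k / j) (fun t => j * t)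
        · intro k hk
          simp only [Finset.mem_filter, Finset.mem_range] at hk
          simp only [Finset.mem_range]
          obtain ⟨t, rfl⟩ := hk.2
          rw [Nat.mul_div_cancel_left t (by omega)]
          have h1 := hk.1
          exact Nat.lt_succ_of_le (Nat.le_of_mul_le_mul_left (show j * t ≤ j * m by omega) (show 0 < j by omega))
        · intro t ht
          simp only [Finset.mem_range] at ht
          simp only [Finset.mem_filter, Finset.mem_range]
          exact ⟨by have := Nat.mul_le_mul_left j (by omega : t ≤ m); omega, Dvd.intro t rfl⟩
        · intro k hk
          simp only [Finset.mem_filter] at hk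
          exact Nat.mul_div_cancel' hk.2 |>.symm ▸ (Nat.mul_div_cancel' hk.2)
        · intro t ht
          exact Nat.mul_div_cancel_left t (by omega)
        · intro k hk
          simp only [Finset.mem_filter, Finset.mem_range] at hk
          obtain ⟨t, rfl⟩ := hk.2
          rw [Nat.mul_div_cancel_left t (by omega), ih]
          have htm : t ≤ m := Nat.le_of_mul_le_mul_left (show j * t ≤ j * m by omega) (show 0 < j by omega)
          have hdd : j ∣ j * m - j * t := Nat.dvd_sub (Dvd.intro m rfl) (Dvd.intro t rfl)
          rw [if_pos (Dvd.intro t rfl), Nat.mul_div_cancel_left t (by omega)]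
          simp only [S, coeff_mk, if_pos hdd, mul_one]
      rw [key]
      rw [← Nat.cast_sum]
      norm_cast
      have := hockey (a - 1) m
      rw [this]
      congr 1
      omega
    · rw [if_neg h]
      apply Finset.sum_eq_zero
      intro k hk
      simp only [Finset.mem_range] at hk
      by_cases h1 : j ∣ k
      · have h2 : ¬ j ∣ (i - k) := by
          intro hd
          exact h (by have := Nat.dvd_add h1 hd; rwa [Nat.add_sub_cancel' (by omega)] at this)
        simp [S, coeff_mk, h2]
      · rw [ih k]
        simp [h1]

lemma coeff_eq_of_mul (F A B : PowerSeries ℚ) (hF : PowerSeries.constantCoeff F = 1) :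
    ∀ n, (∀ k ≤ n, PowerSeries.coeff k (A * F) = PowerSeries.coeff k (B * F)) →
      PowerSeries.coeff n A = PowerSeries.coeff n B := by
  intro n
  induction n using Nat.strong_induction_on with
  | _ n ih =>
    intro h
    have hA := h n le_rfl
    rw [PowerSeries.coeff_mul, PowerSeries.coeff_mul,
      Finset.Nat.sum_antidiagonal_eq_sum_range_succ_mk,
      Finset.Nat.sum_antidiagonal_eq_sum_range_succ_mk,
      Finset.sum_range_succ, Finset.sum_range_succ] at hA
    have heq : ∀ k ∈ Finset.range n,
        PowerSeries.coeff (k, n - k).1 A * PowerSeries.coeff (k, n - k).2 F =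
        PowerSeries.coeff (k, n - k).1 B * PowerSeries.coeff (k, n - k).2 F := by
      intro k hk
      simp only [Finset.mem_range] at hk
      rw [ih k hk (fun l hl => h l (le_trans hl (le_of_lt hk)))]
    rw [Finset.sum_congr rfl heq] at hA
    have h0 : PowerSeries.coeff (n, n - n).2 F = 1 := by
      simp [Nat.sub_self, PowerSeries.coeff_zero_eq_constantCoeff, hF]
    rw [h0] at hA
    simpa using hA

def g (n : ℕ) : ℕ :=
  if n % 3 = 0 then 3 ^ (n / 3)
  else if n % 3 = 1 then (if n = 1 then 1 else 4 * 3 ^ (n / 3 - 1))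
  else 2 * 3 ^ (n / 3)

lemma g_val0 (q : ℕ) : g (3*q) = 3^q := by
  unfold g
  rw [if_pos (by omega), (by omega : 3*q/3 = q)]

lemma g_one : g 1 = 1 := by decide

lemma g_val1 (q : ℕ) (hq : 1 ≤ q) : g (3*q+1) = 4 * 3^(q-1) := by
  unfold g
  rw [if_neg (by omega), if_pos (by omega), if_neg (by omega), (by omega : (3*q+1)/3 = q)]

lemma g_val2 (q : ℕ) : g (3*q+2) = 2 * 3^q := by
  unfold g
  rw [if_neg (by omega), if_neg (by omega), (by omega : (3*q+2)/3 = q)]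

lemma g_pos (n : ℕ) : 0 < g n := by
  unfold g
  split_ifs <;> positivity

private lemma decomp (m : ℕ) : ∃ q r, r < 3 ∧ m = 3*q + r := ⟨m/3, m%3, by omega, by omega⟩

lemma gA (m : ℕ) : 3 * g m ≤ g (m + 3) := by
  obtain ⟨q, r, hr, rfl⟩ := decomp m
  interval_cases r
  · rw [(by ring : 3*q + 0 + 3 = 3*(q+1)), g_val0, (by ring : 3*q+0 = 3*q), g_val0]
    rw [pow_succ]; omega
  · rcases Nat.eq_zero_or_pos q with rfl | hq
    · simp [g_one, (by norm_num : 3*0+1+3 = 3*1+1), g_val1 1 le_rfl]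
    · rw [(by ring : 3*q + 1 + 3 = 3*(q+1)+1), g_val1 (q+1) (by omega), g_val1 q hq]
      rw [(by omega : q + 1 - 1 = (q-1) + 1), pow_succ]
      ring_nf
      omega
  · rw [(by ring : 3*q + 2 + 3 = 3*(q+1)+2), g_val2, g_val2, pow_succ]
    ring_nf
    omega

lemma gB1 (m : ℕ) : g m ≤ g (m + 1) := by
  obtain ⟨q, r, hr, rfl⟩ := decomp m
  interval_cases r
  · rcases Nat.eq_zero_or_pos q with rfl | hq
    · show g 0 ≤ g 1
      decide
    · rw [(by ring : 3*q + 0 + 1 = 3*q+1), g_val1 q hq, (by ring : 3*q+0 = 3*q), g_val0]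
      rw [(by omega : q = (q-1)+1), pow_succ, (by omega : (q-1)+1-1 = q-1)]
      omega
  · rcases Nat.eq_zero_or_pos q with rfl | hq
    · show g 1 ≤ g 2
      decide
    · rw [(by ring : 3*q + 1 + 1 = 3*q+2), g_val2, g_val1 q hq]
      rw [(by omega : q = (q-1)+1), pow_succ, (by omega : (q-1)+1-1 = q-1)]
      omega
  · rw [(by ring : 3*q + 2 + 1 = 3*(q+1)), g_val0, g_val2, pow_succ]
    omega

lemma gB2 (m : ℕ) : 2 * g m ≤ g (m + 2) := by
  obtain ⟨q, r, hr, rfl⟩ := decomp m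
  interval_cases r
  · rw [(by ring : 3*q + 0 + 2 = 3*q+2), g_val2, (by ring : 3*q+0 = 3*q), g_val0]
  · rcases Nat.eq_zero_or_pos q with rfl | hq
    · show 2 * g 1 ≤ g 3
      decide
    · rw [(by ring : 3*q + 1 + 2 = 3*(q+1)), g_val0, g_val1 q hq]
      rw [(by omega : q + 1 = (q-1)+2), pow_succ, pow_succ]
      omega
  · rw [(by ring : 3*q + 2 + 2 = 3*(q+1)+1), g_val1 (q+1) (by omega), g_val2]
    rw [(by omega : q+1-1 = q)]
    omega

lemma gB4 (m : ℕ) : 4 * g m ≤ g (m + 4) := by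
  obtain ⟨q, r, hr, rfl⟩ := decomp m
  interval_cases r
  · rw [(by ring : 3*q + 0 + 4 = 3*(q+1)+1), g_val1 (q+1) (by omega), (by ring : 3*q+0 = 3*q), g_val0]
    rw [(by omega : q+1-1 = q)]
  · rcases Nat.eq_zero_or_pos q with rfl | hq
    · simp [g_one, (by norm_num : 3*0+1+4 = 3*1+2), g_val2]
    · rw [(by ring : 3*q + 1 + 4 = 3*(q+1)+2), g_val2, g_val1 q hq]
      rw [(by omega : q + 1 = (q-1)+2), pow_succ, pow_succ]
      omega
  · rw [(by ring : 3*q + 2 + 4 = 3*(q+2)), g_val0, g_val2]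
    rw [(by omega : q + 2 = q+1+1), pow_succ, pow_succ]
    omega

lemma g_key : ∀ a, 1 ≤ a → ∀ m, a * g m ≤ g (a + m) := by
  intro a
  induction a using Nat.strong_induction_on with
  | _ a ih =>
    intro ha m
    match a, ha with
    | 1, _ => simpa [Nat.add_comm] using gB1 m
    | 2, _ => simpa [Nat.add_comm] using gB2 m
    | 3, _ => simpa [Nat.add_comm] using gA m
    | 4, _ => simpa [Nat.add_comm] using gB4 m
    | (b+5), _ =>
      have h1 : (b+5) * g m ≤ 3 * ((b+2) * g m) := by nlinarith [g_pos m]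
      have h2 : (b+2) * g m ≤ g ((b+2) + m) := ih (b+2) (by omega) (by omega) m
      calc (b+5) * g m ≤ 3 * ((b+2) * g m) := h1
        _ ≤ 3 * g ((b+2) + m) := by omega
        _ ≤ g ((b+2) + m + 3) := gA _
        _ = g ((b+5) + m) := by ring_nf

lemma pow_mul_g (b : ℕ) (hb : 1 ≤ b) (m r : ℕ) : b ^ m * g r ≤ g (b * m + r) := by
  induction m with
  | zero => simpa using le_refl (g r)
  | succ m ih =>
    calc b ^ (m+1) * g r = b * (b ^ m * g r) := by ring
      _ ≤ b * g (b * m + r) := Nat.mul_le_mul_left b ih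
      _ ≤ g (b + (b * m + r)) := g_key b hb _
      _ = g (b * (m+1) + r) := by ring_nf

lemma prod_pow_le_g (t : Finset ℕ) (f : ℕ → ℕ) (ht : ∀ j ∈ t, 1 ≤ j) :
    ∏ j ∈ t, j ^ f j ≤ g (∑ j ∈ t, j * f j) := by
  induction t using Finset.induction_on with
  | empty => simp [g]
  | @insert x s hx ih =>
    rw [Finset.prod_insert hx, Finset.sum_insert hx]
    calc x ^ f x * ∏ j ∈ s, j ^ f j ≤ x ^ f x * g (∑ j ∈ s, j * f j) :=
        Nat.mul_le_mul_left _ (ih (fun j hj => ht j (Finset.mem_insert_of_mem hj)))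
      _ ≤ g (x * f x + ∑ j ∈ s, j * f j) := pow_mul_g x (ht x (Finset.mem_insert_self x s)) _ _

lemma asc_le (a : ℕ) (ha : 1 ≤ a) : ∀ k, a.ascFactorial k ≤ a ^ k * k.factorial
  | 0 => by simp
  | (k+1) => by
    rw [Nat.ascFactorial_succ]
    calc (a + k) * a.ascFactorial k ≤ (a * (k+1)) * (a ^ k * k.factorial) :=
        Nat.mul_le_mul (by nlinarith) (asc_le a ha k)
      _ = a ^ (k+1) * (k+1).factorial := by rw [Nat.factorial_succ]; ring

lemma choose_eq_asc (a k : ℕ) (ha : 1 ≤ a) :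
    a.ascFactorial k = k.factorial * (a - 1 + k).choose k := by
  have h := Nat.ascFactorial_eq_factorial_mul_choose (a-1) k
  rwa [(by omega : a - 1 + 1 = a)] at h

lemma choose_lower (a k : ℕ) (ha : 1 ≤ a) : a ^ k ≤ (a - 1 + k).choose k * k.factorial := by
  have h := Nat.pow_succ_le_ascFactorial a k
  rw [choose_eq_asc a k ha, Nat.mul_comm] at h
  exact h

lemma choose_upper (a k : ℕ) (ha : 1 ≤ a) : (a - 1 + k).choose k ≤ a ^ k := by
  have h := asc_le a ha k
  rw [choose_eq_asc a k ha] at h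
  have hf : 0 < k.factorial := Nat.factorial_pos k
  calc (a - 1 + k).choose k = k.factorial * (a - 1 + k).choose k / k.factorial := by
        rw [Nat.mul_div_cancel_left _ hf]
    _ ≤ a ^ k * k.factorial / k.factorial := Nat.div_le_div_right h
    _ = a ^ k := Nat.mul_div_cancel _ hf

lemma two_mul_choose_two : ∀ m : ℕ, 2 * m.choose 2 = m * (m - 1)
  | 0 => by decide
  | 1 => by decide
  | (m+2) => by
    have h := two_mul_choose_two (m+1)
    rw [Nat.choose_succ_succ (m+1) 1, Nat.choose_one_right]
    simp only [Nat.add_sub_cancel] at *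
    have h2 : (Nat.succ 1) = 2 := rfl
    rw [h2, (by omega : m + 2 - 1 = m + 1)]
    nlinarith

def toPart (n : ℕ) (l : ℕ →₀ ℕ) : Multiset ℕ :=
  (Finset.Icc 1 n).val.bind (fun j => Multiset.replicate (l j / j) j)

lemma count_toPart (n : ℕ) (l : ℕ →₀ ℕ) (j : ℕ) (hj : j ∈ Finset.Icc 1 n) :
    Multiset.count j (toPart n l) = l j / j := by
  unfold toPart
  rw [Multiset.count_bind]
  have : ∀ i ∈ (Finset.Icc 1 n).val, Multiset.count j (Multiset.replicate (l i / i) i)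
      = if i = j then l j / j else 0 := by
    intro i _
    rw [Multiset.count_replicate]
    split_ifs with h1 h2 h2 <;> simp_all
  rw [Multiset.map_congr rfl this]
  have : ((Finset.Icc 1 n).val.map (fun i => if i = j then l j / j else 0)).sum
      = ∑ i ∈ Finset.Icc 1 n, (if i = j then l j / j else 0) := rfl
  rw [this, Finset.sum_ite_eq' (Finset.Icc 1 n) j (fun _ => l j / j), if_pos hj]

lemma mem_toPart (n : ℕ) (l : ℕ →₀ ℕ) (x : ℕ) (hx : x ∈ toPart n l) : x ∈ Finset.Icc 1 n := by
  unfold toPart at hx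
  rw [Multiset.mem_bind] at hx
  obtain ⟨j, hj, hxj⟩ := hx
  rw [Multiset.eq_of_mem_replicate hxj]
  exact hj

lemma sum_toPart (n : ℕ) (l : ℕ →₀ ℕ) (hdvd : ∀ j ∈ Finset.Icc 1 n, j ∣ l j)
    (hsum : ∑ j ∈ Finset.Icc 1 n, l j = n) : (toPart n l).sum = n := by
  unfold toPart
  rw [Multiset.sum_bind]
  have : ∀ i ∈ (Finset.Icc 1 n).val, (Multiset.replicate (l i / i) i).sum = l i := by
    intro i hi
    rw [Multiset.sum_replicate, smul_eq_mul, Nat.div_mul_cancel (hdvd i hi)]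
  rw [Multiset.map_congr rfl this]
  exact hsum

lemma card_bound (n : ℕ) (Sset : Finset (ℕ →₀ ℕ))
    (hS : ∀ l ∈ Sset, (∀ j, l j ≠ 0 → j ∈ Finset.Icc 1 n) ∧
      (∀ j ∈ Finset.Icc 1 n, j ∣ l j) ∧ ∑ j ∈ Finset.Icc 1 n, l j = n) :
    Sset.card ≤ Fintype.card (Nat.Partition n) := by
  classical
  have hinj : Set.InjOn (toPart n) Sset := by
    intro l1 h1 l2 h2 heq
    obtain ⟨hs1, hd1, _⟩ := hS l1 h1
    obtain ⟨hs2, hd2, _⟩ := hS l2 h2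
    ext j
    by_cases hj : j ∈ Finset.Icc 1 n
    · have c1 := count_toPart n l1 j hj
      have c2 := count_toPart n l2 j hj
      rw [heq] at c1
      have : l1 j / j = l2 j / j := by rw [← c1, ← c2]
      calc l1 j = j * (l1 j / j) := (Nat.mul_div_cancel' (hd1 j hj)).symm
        _ = j * (l2 j / j) := by rw [this]
        _ = l2 j := Nat.mul_div_cancel' (hd2 j hj)
    · by_cases hz1 : l1 j = 0
      · by_cases hz2 : l2 j = 0
        · rw [hz1, hz2]
        · exact absurd (hs2 j hz2) hj
      · exact absurd (hs1 j hz1) hj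
  calc Sset.card = (Sset.image (toPart n)).card := (Finset.card_image_of_injOn hinj).symm
    _ ≤ ((Finset.univ : Finset (Nat.Partition n)).image Nat.Partition.parts).card := by
        apply Finset.card_le_card
        intro m hm
        rw [Finset.mem_image] at hm ⊢
        obtain ⟨l, hl, rfl⟩ := hm
        obtain ⟨hs, hd, hsum⟩ := hS l hl
        refine ⟨⟨toPart n l, ?_, sum_toPart n l hd hsum⟩, Finset.mem_univ _, rfl⟩
        intro x hx
        have := mem_toPart n l x hx
        rw [Finset.mem_Icc] at this
        omega
    _ ≤ (Finset.univ : Finset (Nat.Partition n)).card := Finset.card_image_le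
    _ = Fintype.card (Nat.Partition n) := rfl

set_option maxHeartbeats 1000000 in
/-- Bounds for `p_d(n)` when `n ≡ 1 (mod 3)`. -/
theorem pd_bounds_mod_one (d : ℕ) (hd : 1 ≤ d) (p : ℕ → ℚ) (hp : IsPdSeries d p)
    (n : ℕ) (hn : 2 ≤ n) (h3 : n % 3 = 1) :
    3 * ((4 * 3 ^ ((n - 4) / 3) : ℕ) : ℚ) ^ (d - 1) / (2 * (Nat.factorial ((n - 4) / 3) : ℚ)) < p n ∧
    p n ≤ ((4 * 3 ^ ((n - 4) / 3) : ℕ) : ℚ) ^ (d - 1) * (Fintype.card (Nat.Partition n) : ℚ) := by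
  have hn4 : 4 ≤ n := by omega
  set K := (n - 4) / 3 with hK
  have hnK : n = 3 * K + 4 := by omega
  have hA1 : 1 ≤ 3 ^ (d-1) := Nat.one_le_pow _ _ (by norm_num)
  have hB41 : 1 ≤ 4 ^ (d-1) := Nat.one_le_pow _ _ (by norm_num)
  have h2d1 : 1 ≤ 2 ^ (d-1) := Nat.one_le_pow _ _ (by norm_num)
  -- Step 1: identify p n with the coefficient of the inverse product
  set F : PowerSeries ℚ := ∏ j ∈ Finset.Icc 1 n, (1 - (X : PowerSeries ℚ)^j)^(j^(d-1)) with hF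
  set B : PowerSeries ℚ := ∏ j ∈ Finset.Icc 1 n, (S j)^(j^(d-1)) with hB
  have hBF : B * F = 1 := by
    rw [hB, hF, ← Finset.prod_mul_distrib]
    apply Finset.prod_eq_one
    intro j hj
    rw [← mul_pow, S_mul j (Finset.mem_Icc.mp hj).1, one_pow]
  have hFc : PowerSeries.constantCoeff F = 1 := by
    rw [hF, map_prod]
    apply Finset.prod_eq_one
    intro j hj
    rw [map_pow, map_sub, map_one, map_pow, PowerSeries.constantCoeff_X,
      zero_pow (by have := (Finset.mem_Icc.mp hj).1; omega : j ≠ 0), sub_zero, one_pow]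
  have hpB : p n = PowerSeries.coeff n B := by
    have h := coeff_eq_of_mul F (PowerSeries.mk p) B hFc n ?_
    · rwa [PowerSeries.coeff_mk] at h
    · intro k hk
      rw [hBF, hp n k hk, PowerSeries.coeff_one]
  -- Step 2: coefficient expansion
  have hja : ∀ j, 1 ≤ j → 1 ≤ j ^ (d-1) := fun j hj => Nat.one_le_pow _ _ (by omega)
  have hcoeffB : PowerSeries.coeff n B = ∑ l ∈ Finset.finsuppAntidiag (Finset.Icc 1 n) n,
      ∏ j ∈ Finset.Icc 1 n, (if j ∣ l j then (((j^(d-1) - 1 + l j / j).choose (l j / j) : ℕ) : ℚ) else 0) := by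
    rw [hB, PowerSeries.coeff_prod]
    apply Finset.sum_congr rfl
    intro l _
    apply Finset.prod_congr rfl
    intro j hj
    have hj1 : 1 ≤ j := (Finset.mem_Icc.mp hj).1
    rw [coeff_S_pow j hj1 _ (hja j hj1)]
  have hTnn : ∀ l : ℕ →₀ ℕ, (0:ℚ) ≤ ∏ j ∈ Finset.Icc 1 n, (if j ∣ l j then (((j^(d-1) - 1 + l j / j).choose (l j / j) : ℕ) : ℚ) else 0) := by
    intro l
    apply Finset.prod_nonneg
    intro j _
    split_ifs
    · positivity
    · exact le_refl 0
  -- The two distinguished terms for the lower bound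
  set l1 : ℕ →₀ ℕ := Finsupp.single 4 4 + Finsupp.single 3 (3*K) with hl1
  set l2 : ℕ →₀ ℕ := Finsupp.single 2 4 + Finsupp.single 3 (3*K) with hl2
  have happ1 : ∀ j, l1 j = if j = 4 then 4 else if j = 3 then 3*K else 0 := by
    intro j
    simp only [hl1, Finsupp.add_apply, Finsupp.single_apply]
    split_ifs <;> omega
  have happ2 : ∀ j, l2 j = if j = 2 then 4 else if j = 3 then 3*K else 0 := by
    intro j
    simp only [hl2, Finsupp.add_apply, Finsupp.single_apply]
    split_ifs <;> omega
  have h2n : (2:ℕ) ∈ Finset.Icc 1 n := by rw [Finset.mem_Icc]; omega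
  have h3nn : (3:ℕ) ∈ Finset.Icc 1 n := by rw [Finset.mem_Icc]; omega
  have h4n : (4:ℕ) ∈ Finset.Icc 1 n := by rw [Finset.mem_Icc]; omega
  have hsum1 : ∑ j ∈ Finset.Icc 1 n, l1 j = n := by
    simp only [hl1, Finsupp.add_apply, Finset.sum_add_distrib, Finsupp.single_apply]
    rw [Finset.sum_ite_eq (Finset.Icc 1 n) 4 (fun _ => 4),
      Finset.sum_ite_eq (Finset.Icc 1 n) 3 (fun _ => 3*K), if_pos h4n, if_pos h3nn]
    omega
  have hsum2 : ∑ j ∈ Finset.Icc 1 n, l2 j = n := by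
    simp only [hl2, Finsupp.add_apply, Finset.sum_add_distrib, Finsupp.single_apply]
    rw [Finset.sum_ite_eq (Finset.Icc 1 n) 2 (fun _ => 4),
      Finset.sum_ite_eq (Finset.Icc 1 n) 3 (fun _ => 3*K), if_pos h2n, if_pos h3nn]
    omega
  have hmem1 : l1 ∈ Finset.finsuppAntidiag (Finset.Icc 1 n) n := by
    rw [Finset.mem_finsuppAntidiag]
    refine ⟨hsum1, ?_⟩
    intro j hj
    rw [Finsupp.mem_support_iff, happ1 j] at hj
    rw [Finset.mem_Icc]
    split_ifs at hj <;> omega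
  have hmem2 : l2 ∈ Finset.finsuppAntidiag (Finset.Icc 1 n) n := by
    rw [Finset.mem_finsuppAntidiag]
    refine ⟨hsum2, ?_⟩
    intro j hj
    rw [Finsupp.mem_support_iff, happ2 j] at hj
    rw [Finset.mem_Icc]
    split_ifs at hj <;> omega
  have hsub34 : ({3, 4} : Finset ℕ) ⊆ Finset.Icc 1 n := by
    intro x hx
    rw [Finset.mem_insert, Finset.mem_singleton] at hx
    rw [Finset.mem_Icc]
    omega
  have hsub23 : ({2, 3} : Finset ℕ) ⊆ Finset.Icc 1 n := by
    intro x hx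
    rw [Finset.mem_insert, Finset.mem_singleton] at hx
    rw [Finset.mem_Icc]
    omega
  have hdvd33 : (3:ℕ) ∣ 3 * K := Dvd.intro K rfl
  have hdiv3 : 3 * K / 3 = K := Nat.mul_div_cancel_left K (by norm_num)
  have hprod1 : ∏ j ∈ Finset.Icc 1 n, (if j ∣ l1 j then (((j^(d-1) - 1 + l1 j / j).choose (l1 j / j) : ℕ) : ℚ) else 0) = ((4 ^ (d-1) * (3 ^ (d-1) - 1 + K).choose K : ℕ) : ℚ) := by
    rw [← Finset.prod_subset hsub34 (fun x hx hnx => ?_)]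
    · rw [Finset.prod_pair (by norm_num : (3:ℕ) ≠ 4)]
      have e3 : l1 3 = 3 * K := by rw [happ1]; norm_num
      have e4 : l1 4 = 4 := by rw [happ1]; norm_num
      rw [e3, e4, if_pos hdvd33, if_pos (dvd_refl 4), hdiv3,
        (by norm_num : 4 / 4 = 1), Nat.choose_one_right,
        (by omega : 4 ^ (d-1) - 1 + 1 = 4 ^ (d-1))]
      push_cast
      ring
    · have hx0 : l1 x = 0 := by
        rw [happ1]
        rw [Finset.mem_insert, Finset.mem_singleton] at hnx
        push_neg at hnx
        rw [if_neg hnx.2, if_neg hnx.1]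
      rw [hx0, if_pos (dvd_zero x), Nat.zero_div, Nat.add_zero, Nat.choose_zero_right,
        Nat.cast_one]
  have hprod2 : ∏ j ∈ Finset.Icc 1 n, (if j ∣ l2 j then (((j^(d-1) - 1 + l2 j / j).choose (l2 j / j) : ℕ) : ℚ) else 0) = (((2 ^ (d-1) + 1).choose 2 * (3 ^ (d-1) - 1 + K).choose K : ℕ) : ℚ) := by
    rw [← Finset.prod_subset hsub23 (fun x hx hnx => ?_)]
    · rw [Finset.prod_pair (by norm_num : (2:ℕ) ≠ 3)]
      have e3 : l2 3 = 3 * K := by rw [happ2]; norm_num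
      have e2 : l2 2 = 4 := by rw [happ2]; norm_num
      rw [e3, e2, if_pos hdvd33, if_pos (by norm_num : (2:ℕ) ∣ 4), hdiv3,
        (by norm_num : 4 / 2 = 2), (by omega : 2 ^ (d-1) - 1 + 2 = 2 ^ (d-1) + 1)]
      push_cast
      ring
    · have hx0 : l2 x = 0 := by
        rw [happ2]
        rw [Finset.mem_insert, Finset.mem_singleton] at hnx
        push_neg at hnx
        rw [if_neg hnx.1, if_neg hnx.2]
      rw [hx0, if_pos (dvd_zero x), Nat.zero_div, Nat.add_zero, Nat.choose_zero_right,
        Nat.cast_one]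
  have hl12 : l1 ≠ l2 := by
    intro h
    have h4 : l1 4 = l2 4 := by rw [h]
    rw [happ1, happ2] at h4
    norm_num at h4
  have hlow : (((4 ^ (d-1) + (2 ^ (d-1) + 1).choose 2) * (3 ^ (d-1) - 1 + K).choose K : ℕ) : ℚ)
      ≤ p n := by
    rw [hpB, hcoeffB]
    have hsub : ({l1, l2} : Finset (ℕ →₀ ℕ)) ⊆ Finset.finsuppAntidiag (Finset.Icc 1 n) n := by
      intro x hx
      rw [Finset.mem_insert, Finset.mem_singleton] at hx
      rcases hx with rfl | rfl
      exacts [hmem1, hmem2]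
    have hs := Finset.sum_le_sum_of_subset_of_nonneg hsub (fun l _ _ => hTnn l)
    rw [Finset.sum_pair hl12, hprod1, hprod2] at hs
    refine le_trans (le_of_eq ?_) hs
    push_cast
    ring
  constructor
  · -- lower bound
    have hkey : 3 * (4 * 3^K)^(d-1) <
        2 * K.factorial * ((4 ^ (d-1) + (2 ^ (d-1) + 1).choose 2) * (3 ^ (d-1) - 1 + K).choose K) := by
      have e1 : (4 * 3^K)^(d-1) = 4 ^ (d-1) * (3 ^ (d-1))^K := by
        rw [mul_pow, ← pow_mul, ← pow_mul, Nat.mul_comm K (d-1)]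
      have e2 : (3 ^ (d-1))^K ≤ (3 ^ (d-1) - 1 + K).choose K * K.factorial :=
        choose_lower _ K hA1
      have e3 : 2 * (2 ^ (d-1) + 1).choose 2 = (2 ^ (d-1) + 1) * 2 ^ (d-1) := by
        rw [two_mul_choose_two, Nat.add_sub_cancel]
      have e4 : 4 ^ (d-1) = 2 ^ (d-1) * 2 ^ (d-1) := by
        rw [(by norm_num : (4:ℕ) = 2 * 2), mul_pow]
      have e5 : 3 * 4 ^ (d-1) < 2 * (4 ^ (d-1) + (2 ^ (d-1) + 1).choose 2) := by nlinarith
      have hAK : 0 < (3 ^ (d-1)) ^ K := Nat.pow_pos (n := K) (by omega)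
      rw [e1]
      have h6 := mul_lt_mul_of_pos_right e5 hAK
      have h7 := Nat.mul_le_mul
        (le_refl (2 * (4 ^ (d-1) + (2 ^ (d-1) + 1).choose 2))) e2
      nlinarith [h6, h7]
    rw [div_lt_iff₀ (by positivity : (0:ℚ) < 2 * (Nat.factorial K : ℚ))]
    refine lt_of_lt_of_le ?_ (mul_le_mul_of_nonneg_right hlow (by positivity))
    have h1 := (Nat.cast_lt (α := ℚ)).mpr hkey
    push_cast at h1
    push_cast
    linarith
  · -- upper bound
    have hgn : g n = 4 * 3^K := by
      rw [hnK, (by ring : 3*K+4 = 3*(K+1)+1), g_val1 (K+1) (by omega), Nat.add_sub_cancel]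
    have hsplit : (∑ l ∈ Finset.finsuppAntidiag (Finset.Icc 1 n) n, ∏ j ∈ Finset.Icc 1 n, (if j ∣ l j then (((j^(d-1) - 1 + l j / j).choose (l j / j) : ℕ) : ℚ) else 0))
        = ∑ l ∈ (Finset.finsuppAntidiag (Finset.Icc 1 n) n).filter
            (fun (l : ℕ →₀ ℕ) => ∀ j ∈ Finset.Icc 1 n, j ∣ l j), ∏ j ∈ Finset.Icc 1 n, (if j ∣ l j then (((j^(d-1) - 1 + l j / j).choose (l j / j) : ℕ) : ℚ) else 0) := by
      rw [Finset.sum_filter_of_ne]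
      intro l _ hTl j hj
      by_contra hnd
      exact hTl (Finset.prod_eq_zero hj (by rw [if_neg hnd]))
    have hterm : ∀ l ∈ (Finset.finsuppAntidiag (Finset.Icc 1 n) n).filter
        (fun (l : ℕ →₀ ℕ) => ∀ j ∈ Finset.Icc 1 n, j ∣ l j),
        ∏ j ∈ Finset.Icc 1 n, (if j ∣ l j then (((j^(d-1) - 1 + l j / j).choose (l j / j) : ℕ) : ℚ) else 0) ≤ ((4 * 3 ^ K : ℕ) : ℚ) ^ (d-1) := by
      intro l hl
      rw [Finset.mem_filter, Finset.mem_finsuppAntidiag] at hl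
      obtain ⟨⟨hsum, hsupp⟩, hdvd⟩ := hl
      have hcast : ∏ j ∈ Finset.Icc 1 n, (if j ∣ l j then (((j^(d-1) - 1 + l j / j).choose (l j / j) : ℕ) : ℚ) else 0)
          = ((∏ j ∈ Finset.Icc 1 n, (j^(d-1) - 1 + l j / j).choose (l j / j) : ℕ) : ℚ) := by
        rw [Nat.cast_prod]
        exact Finset.prod_congr rfl (fun j hj => by rw [if_pos (hdvd j hj)])
      rw [hcast]
      have hNat : (∏ j ∈ Finset.Icc 1 n, (j^(d-1) - 1 + l j / j).choose (l j / j))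
          ≤ (4 * 3 ^ K)^(d-1) := by
        calc (∏ j ∈ Finset.Icc 1 n, (j^(d-1) - 1 + l j / j).choose (l j / j))
            ≤ ∏ j ∈ Finset.Icc 1 n, (j^(d-1))^(l j / j) :=
              Finset.prod_le_prod' (fun j hj =>
                choose_upper (j^(d-1)) (l j / j) (hja j (Finset.mem_Icc.mp hj).1))
          _ = (∏ j ∈ Finset.Icc 1 n, j^(l j / j))^(d-1) := by
              rw [← Finset.prod_pow]
              exact Finset.prod_congr rfl (fun j _ => by
                rw [← pow_mul, ← pow_mul, Nat.mul_comm])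
          _ ≤ (g n)^(d-1) := by
              apply Nat.pow_le_pow_left
              have hsumeq : ∑ j ∈ Finset.Icc 1 n, j * (l j / j) = n := by
                have h9 : ∑ j ∈ Finset.Icc 1 n, j * (l j / j) = ∑ j ∈ Finset.Icc 1 n, l j :=
                  Finset.sum_congr rfl (fun j hj => Nat.mul_div_cancel' (hdvd j hj))
                exact h9.trans hsum
              calc (∏ j ∈ Finset.Icc 1 n, j^(l j / j))
                  ≤ g (∑ j ∈ Finset.Icc 1 n, j * (l j / j)) :=
                    prod_pow_le_g _ _ (fun j hj => (Finset.mem_Icc.mp hj).1)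
                _ = g n := by rw [hsumeq]
          _ = (4 * 3 ^ K)^(d-1) := by rw [hgn]
      exact_mod_cast hNat
    have hcard : ((Finset.finsuppAntidiag (Finset.Icc 1 n) n).filter
        (fun (l : ℕ →₀ ℕ) => ∀ j ∈ Finset.Icc 1 n, j ∣ l j)).card ≤ Fintype.card (Nat.Partition n) := by
      apply card_bound n
      intro l hl
      rw [Finset.mem_filter, Finset.mem_finsuppAntidiag] at hl
      exact ⟨fun j hj => hl.1.2 (Finsupp.mem_support_iff.mpr hj), hl.2, hl.1.1⟩
    rw [hpB, hcoeffB, hsplit]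
    calc (∑ l ∈ (Finset.finsuppAntidiag (Finset.Icc 1 n) n).filter
          (fun (l : ℕ →₀ ℕ) => ∀ j ∈ Finset.Icc 1 n, j ∣ l j), ∏ j ∈ Finset.Icc 1 n, (if j ∣ l j then (((j^(d-1) - 1 + l j / j).choose (l j / j) : ℕ) : ℚ) else 0))
        ≤ ∑ l ∈ (Finset.finsuppAntidiag (Finset.Icc 1 n) n).filter
            (fun (l : ℕ →₀ ℕ) => ∀ j ∈ Finset.Icc 1 n, j ∣ l j), ((4 * 3 ^ K : ℕ) : ℚ) ^ (d-1) :=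
          Finset.sum_le_sum hterm
      _ = (((Finset.finsuppAntidiag (Finset.Icc 1 n) n).filter
            (fun (l : ℕ →₀ ℕ) => ∀ j ∈ Finset.Icc 1 n, j ∣ l j)).card : ℚ) * ((4 * 3 ^ K : ℕ) : ℚ) ^ (d-1) := by
          rw [Finset.sum_const, nsmul_eq_mul]
      _ ≤ (Fintype.card (Nat.Partition n) : ℚ) * ((4 * 3 ^ K : ℕ) : ℚ) ^ (d-1) := by
          apply mul_le_mul_of_nonneg_right _ (by positivity)
          exact_mod_cast hcard
      _ = ((4 * 3 ^ K : ℕ) : ℚ) ^ (d-1) * (Fintype.card (Nat.Partition n) : ℚ) := by ring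
end

section
/- For n ≥ 2 with n ≡ 2 (mod 3) and d ≥ 1, the coefficients p_d(n) satisfy (2·3^{(n-2)/3})^{d-1}/((n-2)/3)! < p_d(n) ≤ (2·3^{(n-2)/3})^{d-1}·p(n). -/
open PowerSeries Finset

/-! ### Auxiliary: the maximal product of parts function `gmax` -/

def gmax : ℕ → ℕ
  | 0 => 1
  | 1 => 1
  | 2 => 2
  | 3 => 3
  | 4 => 4
  | (n+5) => 3 * gmax (n+2)

lemma gmax_mul_le : ∀ a b : ℕ, gmax a * gmax b ≤ gmax (a + b) := by
  have key : ∀ N a b : ℕ, a + b ≤ N → gmax a * gmax b ≤ gmax (a + b) := by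
    intro N
    induction N with
    | zero =>
      intro a b h
      obtain ⟨rfl, rfl⟩ : a = 0 ∧ b = 0 := by omega
      decide
    | succ N ih =>
      intro a b h
      by_cases ha : 5 ≤ a
      · obtain ⟨c, rfl⟩ : ∃ c, a = c + 5 := ⟨a - 5, by omega⟩
        have h1 : gmax (c + 5) = 3 * gmax (c + 2) := rfl
        have h2 : gmax (c + 5 + b) = 3 * gmax (c + 2 + b) := by
          have e1 : c + 5 + b = (c + b) + 5 := by ring
          have e2 : c + 2 + b = (c + b) + 2 := by ring
          rw [e1, e2]; rfl
        rw [h1, h2, Nat.mul_assoc]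
        exact Nat.mul_le_mul_left 3 (ih (c+2) b (by omega))
      · by_cases hb : 5 ≤ b
        · obtain ⟨c, rfl⟩ : ∃ c, b = c + 5 := ⟨b - 5, by omega⟩
          have h1 : gmax (c + 5) = 3 * gmax (c + 2) := rfl
          have h2 : gmax (a + (c + 5)) = 3 * gmax (a + (c + 2)) := by
            have e1 : a + (c + 5) = (a + c) + 5 := by ring
            have e2 : a + (c + 2) = (a + c) + 2 := by ring
            rw [e1, e2]; rfl
          rw [h1, h2, Nat.mul_left_comm]
          exact Nat.mul_le_mul_left 3 (ih a (c+2) (by omega))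
        · interval_cases a <;> interval_cases b <;> decide
  exact fun a b => key (a+b) a b le_rfl

lemma le_gmax : ∀ k : ℕ, k ≤ gmax k := by
  intro k
  induction k using Nat.strong_induction_on with
  | _ k ih =>
    match k with
    | 0 => decide
    | 1 => decide
    | 2 => decide
    | 3 => decide
    | 4 => decide
    | (c+5) =>
      have : gmax (c+5) = 3 * gmax (c+2) := rfl
      have h2 := ih (c+2) (by omega)
      omega

lemma one_le_gmax (n : ℕ) : 1 ≤ gmax n := by
  cases n with
  | zero => decide
  | succ m => exact le_trans (by omega) (le_gmax (m+1))

lemma mul_gmax_sub_le {k n : ℕ} (hk : 1 ≤ k) (hkn : k ≤ n) : k * gmax (n - k) ≤ gmax n := by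
  calc k * gmax (n - k) ≤ gmax k * gmax (n - k) :=
        Nat.mul_le_mul_right _ (le_gmax k)
    _ ≤ gmax (k + (n - k)) := gmax_mul_le k (n - k)
    _ = gmax n := by congr 1; omega

lemma gmax_mod_two {n : ℕ} (hn : n % 3 = 2) : gmax n = 2 * 3 ^ ((n - 2) / 3) := by
  induction n using Nat.strong_induction_on with
  | _ n ih =>
    match n, hn with
    | 2, _ => decide
    | (c+5), hn =>
      have h1 : gmax (c+5) = 3 * gmax (c+2) := rfl
      have h2 : (c + 2) % 3 = 2 := by omega
      rw [h1, ih (c+2) (by omega) h2]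
      have e : (c + 5 - 2) / 3 = (c + 2 - 2) / 3 + 1 := by omega
      rw [e, pow_succ]; ring

lemma prod_pow_le_gmax (n : ℕ) : ∀ (s : Finset ℕ) (t : ℕ → ℕ), (∀ k ∈ s, 1 ≤ k) →
    (∑ k ∈ s, k * t k) = n → (∏ k ∈ s, k ^ t k) ≤ gmax n := by
  induction n using Nat.strong_induction_on with
  | _ n ih =>
    intro s t hs hsum
    by_cases hz : ∀ k ∈ s, t k = 0
    · have h1 : ∏ k ∈ s, k ^ t k = 1 :=
        Finset.prod_eq_one fun k hk => by rw [hz k hk, pow_zero]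
      rw [h1]; exact one_le_gmax n
    · push_neg at hz
      obtain ⟨k0, hk0s, hk0⟩ := hz
      have hk01 : 1 ≤ k0 := hs k0 hk0s
      have hk0n : k0 ≤ n := by
        rw [← hsum]
        calc k0 ≤ k0 * t k0 := Nat.le_mul_of_pos_right _ (by omega)
          _ ≤ ∑ k ∈ s, k * t k :=
            Finset.single_le_sum (f := fun k => k * t k) (fun k _ => Nat.zero_le _) hk0s
      set t' : ℕ → ℕ := Function.update t k0 (t k0 - 1) with ht'
      have ht'k : ∀ k ∈ s.erase k0, t' k = t k := fun k hk => by
        rw [ht', Function.update_of_ne (Finset.ne_of_mem_erase hk)]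
      have ht'k0 : t' k0 = t k0 - 1 := by rw [ht', Function.update_self]
      have hsum' : (∑ k ∈ s, k * t' k) = n - k0 := by
        have h1 : (∑ k ∈ s.erase k0, k * t' k) + k0 * t' k0 = ∑ k ∈ s, k * t' k :=
          Finset.sum_erase_add s _ hk0s
        have h2 : (∑ k ∈ s.erase k0, k * t k) + k0 * t k0 = ∑ k ∈ s, k * t k :=
          Finset.sum_erase_add s _ hk0s
        have h3 : (∑ k ∈ s.erase k0, k * t' k) = ∑ k ∈ s.erase k0, k * t k :=
          Finset.sum_congr rfl fun k hk => by rw [ht'k k hk]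
        rw [ht'k0] at h1
        have h5 : k0 * (t k0 - 1) + k0 = k0 * t k0 := by
          conv_rhs => rw [show t k0 = (t k0 - 1) + 1 by omega]
          ring
        omega
      have hprod : (∏ k ∈ s, k ^ t k) = k0 * ∏ k ∈ s, k ^ t' k := by
        have h1 : (∏ k ∈ s.erase k0, k ^ t' k) * k0 ^ t' k0 = ∏ k ∈ s, k ^ t' k :=
          Finset.prod_erase_mul s _ hk0s
        have h2 : (∏ k ∈ s.erase k0, k ^ t k) * k0 ^ t k0 = ∏ k ∈ s, k ^ t k :=
          Finset.prod_erase_mul s _ hk0s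
        have h3 : (∏ k ∈ s.erase k0, k ^ t' k) = ∏ k ∈ s.erase k0, k ^ t k :=
          Finset.prod_congr rfl fun k hk => by rw [ht'k k hk]
        have h4 : k0 ^ t k0 = k0 * k0 ^ t' k0 := by
          rw [ht'k0]
          conv_lhs => rw [show t k0 = 1 + (t k0 - 1) by omega]
          rw [pow_add, pow_one]
        rw [← h1, ← h2, h3, h4]; ring
      rw [hprod]
      calc k0 * ∏ k ∈ s, k ^ t' k ≤ k0 * gmax (n - k0) :=
            Nat.mul_le_mul_left k0 (ih (n - k0) (by omega) s t' hs hsum')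
        _ ≤ gmax n := mul_gmax_sub_le hk01 hk0n

/-! ### Auxiliary: power series inverse of `(1 - X^k)^(a+1)` -/

noncomputable def Hser (k a : ℕ) : PowerSeries ℚ :=
  PowerSeries.mk fun j => if k ∣ j then ((a + j / k).choose (j / k) : ℚ) else 0

lemma coeff_Hser (k a j : ℕ) :
    (PowerSeries.coeff j) (Hser k a) =
      if k ∣ j then ((a + j / k).choose (j / k) : ℚ) else 0 :=
  coeff_mk _ _

lemma coeff_Hser_mul_sub (k : ℕ) (a j : ℕ) :
    (PowerSeries.coeff j) (Hser k a * (1 - X ^ k)) =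
      (PowerSeries.coeff j) (Hser k a) -
        (if k ≤ j then (PowerSeries.coeff (j - k)) (Hser k a) else 0) := by
  rw [mul_sub, mul_one, map_sub, PowerSeries.coeff_mul_X_pow']

lemma Hser_succ_mul (k : ℕ) (hk : 1 ≤ k) (a : ℕ) :
    Hser k (a + 1) * (1 - X ^ k) = Hser k a := by
  ext j
  rw [coeff_Hser_mul_sub k]
  by_cases hd : k ∣ j
  · obtain ⟨t, rfl⟩ := hd
    have hdiv : k * t / k = t := Nat.mul_div_cancel_left t (by omega)
    rcases Nat.eq_zero_or_pos t with rfl | ht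
    · simp only [Nat.mul_zero, coeff_Hser, Nat.dvd_zero, if_true, hdiv]
      have : ¬ k ≤ 0 := by omega
      simp [this, Nat.zero_div]
    · have h1 : k ≤ k * t := Nat.le_mul_of_pos_right _ ht
      have h2 : k * t - k = k * (t - 1) := by
        rw [Nat.mul_sub]; omega
      have h3 : k ∣ k * t - k := by rw [h2]; exact Dvd.intro _ rfl
      have h4 : (k * t - k) / k = t - 1 := by
        rw [h2, Nat.mul_div_cancel_left _ (show 0 < k by omega)]
      simp only [coeff_Hser, Dvd.intro t rfl, if_true, h1, if_true, h3, hdiv, h4]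
      obtain ⟨s, rfl⟩ : ∃ s, t = s + 1 := ⟨t - 1, by omega⟩
      have key : (a + 1 + (s + 1)).choose (s + 1) =
          (a + (s + 1)).choose (s + 1) + (a + 1 + s).choose s := by
        have := Nat.choose_succ_succ' (a + s + 1) s
        have e : a + 1 + (s + 1) = (a + s + 1) + 1 := by ring
        rw [e, this]
        have e2 : a + s + 1 = a + (s + 1) := by ring
        have e3 : a + s + 1 = a + 1 + s := by ring
        rw [← e2, ← e3]
        omega
      simp only [Nat.add_sub_cancel]
      rw [key]
      push_cast
      ring
  · have hd2 : ∀ b, (if k ≤ j then (PowerSeries.coeff (j - k)) (Hser k b) else 0) = 0 := by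
      intro b
      split
      · rw [coeff_Hser, if_neg]
        intro hcon
        apply hd
        have h5 := Nat.dvd_add hcon (dvd_refl k)
        rwa [Nat.sub_add_cancel (by assumption)] at h5
      · rfl
    rw [hd2, coeff_Hser, coeff_Hser, if_neg hd, if_neg hd, sub_zero]

lemma Hser_zero_mul (k : ℕ) (hk : 1 ≤ k) : Hser k 0 * (1 - X ^ k) = 1 := by
  ext j
  rw [coeff_Hser_mul_sub k, PowerSeries.coeff_one]
  by_cases hj : j = 0
  · subst hj
    have : ¬ k ≤ 0 := by omega
    simp [coeff_Hser, this]
  · simp only [hj, if_false]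
    by_cases hd : k ∣ j
    · have h1 : k ≤ j := Nat.le_of_dvd (by omega) hd
      have h3 : k ∣ j - k := Nat.dvd_sub hd (dvd_refl k)
      simp [coeff_Hser, hd, h1, h3, Nat.choose_self]
    · have hd2 : ¬ (k ≤ j ∧ k ∣ j - k) := by
        rintro ⟨h1, h2⟩
        apply hd
        have h5 := Nat.dvd_add h2 (dvd_refl k)
        rwa [Nat.sub_add_cancel h1] at h5
      rw [coeff_Hser, if_neg hd]
      split
      · rw [coeff_Hser, if_neg (fun hcon => hd2 ⟨by assumption, hcon⟩), sub_zero]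
      · rw [sub_zero]

lemma Hser_mul_pow (k : ℕ) (hk : 1 ≤ k) (a : ℕ) :
    Hser k a * (1 - X ^ k) ^ (a + 1) = 1 := by
  induction a with
  | zero => rw [pow_one]; exact Hser_zero_mul k hk
  | succ a ih =>
    have : (1 - X ^ k : PowerSeries ℚ) ^ (a + 1 + 1) = (1 - X ^ k) * (1 - X ^ k) ^ (a + 1) := by
      ring
    rw [this, ← mul_assoc, Hser_succ_mul k hk, ih]

lemma coeff_eq_of_coeff_mul_eq (F A B : PowerSeries ℚ)
    (hF : PowerSeries.constantCoeff F = 1) :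
    ∀ (n : ℕ), (∀ k ≤ n, (PowerSeries.coeff k) (A * F) = (PowerSeries.coeff k) (B * F)) →
    (PowerSeries.coeff n) A = (PowerSeries.coeff n) B := by
  intro n
  induction n using Nat.strong_induction_on with
  | _ n ih =>
    intro h
    have hn := h n le_rfl
    rw [PowerSeries.coeff_mul, PowerSeries.coeff_mul] at hn
    have key : ∑ q ∈ antidiagonal n,
        ((PowerSeries.coeff q.1) A - (PowerSeries.coeff q.1) B) *
          (PowerSeries.coeff q.2) F = 0 := by
      simp only [sub_mul, Finset.sum_sub_distrib, hn, sub_self]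
    rw [Finset.sum_eq_single ((n, 0) : ℕ × ℕ)] at key
    · have h0 : (PowerSeries.coeff 0) F = 1 := by
        rwa [PowerSeries.coeff_zero_eq_constantCoeff]
      rw [h0, mul_one, sub_eq_zero] at key
      exact key
    · rintro ⟨i, j⟩ hq hne
      rw [Finset.HasAntidiagonal.mem_antidiagonal] at hq
      have hi : i < n := by
        rcases Nat.lt_or_ge i n with h' | h'
        · exact h'
        · exfalso; apply hne; have : i = n := by omega
          subst this; have : j = 0 := by omega
          subst this; rfl
      rw [ih i hi (fun k hk => h k (by omega)), sub_self, zero_mul]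
    · intro hmem
      exact absurd (by simp : ((n, 0) : ℕ × ℕ) ∈ antidiagonal n) hmem

/-! ### Auxiliary: binomial bounds -/

lemma choose_add_le_pow_succ : ∀ a t : ℕ, (a + t).choose t ≤ (a + 1) ^ t := by
  intro a
  induction a with
  | zero => intro t; simp
  | succ a iha =>
    intro t
    induction t with
    | zero => simp
    | succ t iht =>
      have h1 : (a + 1 + (t + 1)).choose (t + 1) =
          (a + 1 + t).choose t + (a + 1 + t).choose (t + 1) := by
        have := Nat.choose_succ_succ' (a + 1 + t) t
        rw [show a + 1 + (t + 1) = (a + 1 + t) + 1 by ring, this]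
      rw [h1]
      have h2 : (a + 1 + t).choose (t + 1) ≤ (a + 1) ^ (t + 1) := by
        have := iha (t + 1)
        rwa [show a + (t + 1) = a + 1 + t by ring] at this
      calc (a + 1 + t).choose t + (a + 1 + t).choose (t + 1)
          ≤ (a + 1 + 1) ^ t + (a + 1) ^ (t + 1) := Nat.add_le_add iht h2
        _ ≤ (a + 1 + 1) ^ t + (a + 1) * (a + 1 + 1) ^ t := by
            have : (a + 1) ^ (t + 1) ≤ (a + 1) * (a + 1 + 1) ^ t := by
              rw [pow_succ']
              exact Nat.mul_le_mul_left _ (Nat.pow_le_pow_left (by omega) t)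
            omega
        _ = (a + 1 + 1) ^ (t + 1) := by ring

lemma pow_le_choose_mul_factorial (a t : ℕ) :
    (a + 1) ^ t ≤ (a + t).choose t * t.factorial := by
  have h1 : (a + 1) ^ t ≤ (a + t).descFactorial t := by
    have := Nat.pow_sub_le_descFactorial (a + t) t
    rwa [show a + t + 1 - t = a + 1 by omega] at this
  rwa [Nat.descFactorial_eq_factorial_mul_choose, Nat.mul_comm] at h1

/-! ### Auxiliary: counting via partitions -/

def partMultiset (n : ℕ) (l : ℕ →₀ ℕ) : Multiset ℕ :=
  ∑ k ∈ Finset.Icc 1 n, Multiset.replicate (l k / k) k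

lemma count_partMultiset (n : ℕ) (l : ℕ →₀ ℕ) (j : ℕ) :
    Multiset.count j (partMultiset n l) = if j ∈ Finset.Icc 1 n then l j / j else 0 := by
  rw [partMultiset, Multiset.count_sum']
  simp only [Multiset.count_replicate]
  exact Finset.sum_ite_eq' (Finset.Icc 1 n) j (fun k => l k / k)

lemma card_dvd_filter_le (n : ℕ) (hn : 1 ≤ n) :
    ((Finset.finsuppAntidiag (Finset.Icc 1 n) n).filter
      (fun l : ℕ →₀ ℕ => ∀ k ∈ Finset.Icc 1 n, k ∣ l k)).card
      ≤ Fintype.card (Nat.Partition n) := by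
  rw [← Finset.card_univ]
  set T := (Finset.finsuppAntidiag (Finset.Icc 1 n) n).filter
      (fun l : ℕ →₀ ℕ => ∀ k ∈ Finset.Icc 1 n, k ∣ l k) with hT
  have hmem : ∀ l ∈ T, (∑ k ∈ Finset.Icc 1 n, l k = n) ∧ l.support ⊆ Finset.Icc 1 n ∧
      ∀ k ∈ Finset.Icc 1 n, k ∣ l k := by
    intro l hl
    rw [hT, Finset.mem_filter, Finset.mem_finsuppAntidiag] at hl
    exact ⟨hl.1.1, hl.1.2, hl.2⟩
  have hsum : ∀ l ∈ T, (partMultiset n l).sum = n := by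
    intro l hl
    obtain ⟨h1, _, h3⟩ := hmem l hl
    rw [partMultiset, ← Multiset.coe_sumAddMonoidHom, map_sum]
    simp only [Multiset.coe_sumAddMonoidHom, Multiset.sum_replicate, smul_eq_mul]
    rw [Finset.sum_congr rfl (fun k hk => Nat.div_mul_cancel (h3 k hk)), h1]
  have hpos : ∀ l : ℕ →₀ ℕ, ∀ i ∈ partMultiset n l, 0 < i := by
    intro l i hi
    rw [partMultiset, Multiset.mem_sum] at hi
    obtain ⟨k, hk, hik⟩ := hi
    rw [Multiset.eq_of_mem_replicate hik]
    exact lt_of_lt_of_le Nat.zero_lt_one (Finset.mem_Icc.mp hk).1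
  apply Finset.card_le_card_of_injOn
    (fun l => if h : l ∈ T then
        (⟨partMultiset n l, fun hi => hpos l _ hi, hsum l h⟩ : Nat.Partition n)
      else (default : Nat.Partition n))
    (fun _ _ => Finset.mem_univ _)
  intro a ha b hb hab
  rw [Finset.mem_coe] at ha hb
  dsimp only at hab
  rw [dif_pos ha, dif_pos hb] at hab
  have hparts : partMultiset n a = partMultiset n b := congrArg Nat.Partition.parts hab
  obtain ⟨ha1, ha2, ha3⟩ := hmem a ha
  obtain ⟨hb1, hb2, hb3⟩ := hmem b hb
  ext j
  by_cases hj : j ∈ Finset.Icc 1 n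
  · have hc := congrArg (Multiset.count j) hparts
    rw [count_partMultiset, count_partMultiset, if_pos hj, if_pos hj] at hc
    have hja := Nat.div_mul_cancel (ha3 j hj)
    have hjb := Nat.div_mul_cancel (hb3 j hj)
    rw [← hja, ← hjb, hc]
  · have h1 : a j = 0 := by
      by_contra hne
      exact hj (ha2 (Finsupp.mem_support_iff.mpr hne))
    have h2 : b j = 0 := by
      by_contra hne
      exact hj (hb2 (Finsupp.mem_support_iff.mpr hne))
    rw [h1, h2]

/-- Bounds for `p_d(n)` when `n ≡ 2 (mod 3)`. -/
theorem pd_bounds_mod_two (d : ℕ) (hd : 1 ≤ d) (p : ℕ → ℚ) (hp : IsPdSeries d p)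
    (n : ℕ) (hn : 2 ≤ n) (h3 : n % 3 = 2) :
    ((2 * 3 ^ ((n - 2) / 3) : ℕ) : ℚ) ^ (d - 1) / (Nat.factorial ((n - 2) / 3) : ℚ) < p n ∧
    p n ≤ ((2 * 3 ^ ((n - 2) / 3) : ℕ) : ℚ) ^ (d - 1) * (Fintype.card (Nat.Partition n) : ℚ) := by
  have hm3 : 3 * ((n - 2) / 3) + 2 = n := by omega
  set e : ℕ := d - 1 with he
  set m : ℕ := (n - 2) / 3 with hm
  -- the power series and its inverse
  set F : PowerSeries ℚ := ∏ k ∈ Finset.Icc 1 n, (1 - X ^ k) ^ (k ^ e) with hF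
  set A : PowerSeries ℚ := ∏ k ∈ Finset.Icc 1 n, Hser k (k ^ e - 1) with hA
  have hkpow : ∀ k : ℕ, 1 ≤ k → 1 ≤ k ^ e := fun k hk => Nat.one_le_pow _ _ (by omega)
  have hAF : A * F = 1 := by
    rw [hA, hF, ← Finset.prod_mul_distrib]
    apply Finset.prod_eq_one
    intro k hk
    have h1 : 1 ≤ k := (Finset.mem_Icc.mp hk).1
    have h2 := Hser_mul_pow k h1 (k ^ e - 1)
    rwa [Nat.sub_add_cancel (hkpow k h1)] at h2
  have hconst : PowerSeries.constantCoeff F = 1 := by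
    rw [hF, map_prod]
    apply Finset.prod_eq_one
    intro k hk
    have h1 : 1 ≤ k := (Finset.mem_Icc.mp hk).1
    rw [map_pow, map_sub, map_one, map_pow, PowerSeries.constantCoeff_X,
      zero_pow (by omega : k ≠ 0), sub_zero, one_pow]
  have hpA : p n = (PowerSeries.coeff n) A := by
    have h2 : ∀ k ≤ n, (PowerSeries.coeff k) ((PowerSeries.mk p) * F)
        = (PowerSeries.coeff k) (A * F) := by
      intro k hk
      rw [hAF, PowerSeries.coeff_one]
      exact hp n k hk
    have := coeff_eq_of_coeff_mul_eq F (PowerSeries.mk p) A hconst n h2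
    rwa [PowerSeries.coeff_mk] at this
  -- the coefficient as a sum over finsupp antidiagonals
  set f : ℕ → ℕ → ℚ :=
    fun k j => if k ∣ j then (((k ^ e - 1) + j / k).choose (j / k) : ℚ) else 0 with hfd
  set S := Finset.finsuppAntidiag (Finset.Icc 1 n) n with hS
  have hcoeff : p n = ∑ l ∈ S, ∏ k ∈ Finset.Icc 1 n, f k (l k) := by
    rw [hpA, hA, PowerSeries.coeff_prod]
    apply Finset.sum_congr rfl
    intro l _
    apply Finset.prod_congr rfl
    intro k _
    rw [coeff_Hser]
  have hfnn : ∀ k j : ℕ, 0 ≤ f k j := by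
    intro k j
    rw [hfd]
    dsimp only
    split
    · exact Nat.cast_nonneg _
    · exact le_refl 0
  have hTnn : ∀ l : ℕ →₀ ℕ, 0 ≤ ∏ k ∈ Finset.Icc 1 n, f k (l k) :=
    fun l => Finset.prod_nonneg fun k _ => hfnn k (l k)
  have hf0 : ∀ k : ℕ, f k 0 = 1 := by
    intro k
    rw [hfd]
    dsimp only
    rw [if_pos (dvd_zero k), Nat.zero_div, Nat.add_zero, Nat.choose_zero_right, Nat.cast_one]
  constructor
  · -- LOWER BOUND
    set l1 : ℕ →₀ ℕ := Finsupp.single 2 2 + Finsupp.single 3 (3 * m) with hl1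
    set l2 : ℕ →₀ ℕ := Finsupp.single 1 n with hl2
    have hl1app : ∀ k, l1 k = (if 2 = k then 2 else 0) + (if 3 = k then 3 * m else 0) := by
      intro k
      rw [hl1, Finsupp.add_apply, Finsupp.single_apply, Finsupp.single_apply]
    have hl2app : ∀ k, l2 k = if 1 = k then n else 0 := by
      intro k
      rw [hl2, Finsupp.single_apply]
    have hl1S : l1 ∈ S := by
      rw [hS, Finset.mem_finsuppAntidiag]
      constructor
      · rw [Finset.sum_congr rfl (fun k _ => hl1app k), Finset.sum_add_distrib,
          Finset.sum_ite_eq, Finset.sum_ite_eq]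
        simp only [Finset.mem_Icc]
        split_ifs <;> omega
      · intro x hx
        rw [Finsupp.mem_support_iff, hl1app] at hx
        rw [Finset.mem_Icc]
        rcases eq_or_ne x 2 with rfl | h2
        · omega
        rcases eq_or_ne x 3 with rfl | hx3
        · have hmne : m ≠ 0 := by
            intro hm0
            apply hx
            rw [hm0]
            simp
          omega
        · exfalso
          apply hx
          rw [if_neg (fun hc => h2 hc.symm), if_neg (fun hc => hx3 hc.symm)]
          rfl
    have hl2S : l2 ∈ S := by
      rw [hS, Finset.mem_finsuppAntidiag]
      constructor
      · rw [Finset.sum_congr rfl (fun k _ => hl2app k), Finset.sum_ite_eq]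
        rw [if_pos (by rw [Finset.mem_Icc]; omega)]
      · intro x hx
        rw [Finsupp.mem_support_iff, hl2app] at hx
        have : x = 1 := by
          by_contra hc
          exact hx (if_neg (fun hc2 => hc hc2.symm))
        rw [Finset.mem_Icc]
        omega
    have hne12 : l1 ≠ l2 := by
      intro hcon
      have h1 := congrArg (fun g : ℕ →₀ ℕ => g 1) hcon
      rw [hl1app, hl2app] at h1
      norm_num at h1
      omega
    have hTl2 : (∏ k ∈ Finset.Icc 1 n, f k (l2 k)) = 1 := by
      apply Finset.prod_eq_one
      intro k hk
      rcases eq_or_ne k 1 with rfl | hk1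
      · rw [hl2app, if_pos rfl, hfd]
        dsimp only
        rw [if_pos (one_dvd n), Nat.div_one, one_pow, Nat.sub_self, Nat.zero_add,
          Nat.choose_self, Nat.cast_one]
      · rw [hl2app, if_neg (fun hc => hk1 hc.symm), hf0]
    have hTl1 : (∏ k ∈ Finset.Icc 1 n, f k (l1 k))
        = ((2 ^ e * ((3 ^ e - 1 + m).choose m) : ℕ) : ℚ) := by
      have hsub2 : (Finset.Icc 1 n ∩ {2, 3} : Finset ℕ) ⊆ Finset.Icc 1 n :=
        Finset.inter_subset_left
      have hone : ∀ x ∈ Finset.Icc 1 n, x ∉ (Finset.Icc 1 n ∩ {2, 3} : Finset ℕ) →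
          f x (l1 x) = 1 := by
        intro x hx hnx
        have hx23 : x ≠ 2 ∧ x ≠ 3 := by
          constructor <;> intro hc <;> subst hc <;> exact hnx (by
            rw [Finset.mem_inter]
            exact ⟨hx, by simp⟩)
        rw [hl1app, if_neg (fun hc => hx23.1 hc.symm), if_neg (fun hc => hx23.2 hc.symm)]
        exact hf0 x
      rw [← Finset.prod_subset hsub2 hone]
      have hf22 : f 2 (l1 2) = ((2 ^ e : ℕ) : ℚ) := by
        have hl12 : l1 2 = 2 := by rw [hl1app]; norm_num
        rw [hl12, hfd]
        dsimp only
        rw [if_pos (dvd_refl 2), Nat.div_self (by omega : 0 < 2),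
          Nat.sub_add_cancel (hkpow 2 (by omega)), Nat.choose_one_right]
      by_cases hn3 : 3 ≤ n
      · have hint : (Finset.Icc 1 n ∩ {2, 3} : Finset ℕ) = {2, 3} := by
          ext x
          simp only [Finset.mem_inter, Finset.mem_Icc, Finset.mem_insert, Finset.mem_singleton]
          omega
        rw [hint, Finset.prod_pair (by omega : (2 : ℕ) ≠ 3)]
        have hf33 : f 3 (l1 3) = (((3 ^ e - 1 + m).choose m : ℕ) : ℚ) := by
          have hl13 : l1 3 = 3 * m := by rw [hl1app]; norm_num
          rw [hl13, hfd]
          dsimp only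
          rw [if_pos (Dvd.intro m rfl), Nat.mul_div_cancel_left m (by omega : 0 < 3)]
        rw [hf22, hf33]
        push_cast
        ring
      · have hn2 : n = 2 := by omega
        have hm0 : m = 0 := by omega
        have hint : (Finset.Icc 1 n ∩ {2, 3} : Finset ℕ) = {2} := by
          subst hn2
          decide
        rw [hint, Finset.prod_singleton, hf22, hm0]
        push_cast [Nat.choose_zero_right]
        ring
    have hlow : ((2 ^ e * ((3 ^ e - 1 + m).choose m) : ℕ) : ℚ) + 1 ≤ p n := by
      rw [hcoeff]
      have hsubS : ({l1, l2} : Finset (ℕ →₀ ℕ)) ⊆ S := by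
        intro x hx
        rcases Finset.mem_insert.mp hx with rfl | hx
        · exact hl1S
        · rw [Finset.mem_singleton] at hx
          subst hx
          exact hl2S
      calc ((2 ^ e * ((3 ^ e - 1 + m).choose m) : ℕ) : ℚ) + 1
          = ∑ l ∈ ({l1, l2} : Finset (ℕ →₀ ℕ)), ∏ k ∈ Finset.Icc 1 n, f k (l k) := by
            rw [Finset.sum_pair hne12, hTl1, hTl2]
        _ ≤ ∑ l ∈ S, ∏ k ∈ Finset.Icc 1 n, f k (l k) :=
            Finset.sum_le_sum_of_subset_of_nonneg hsubS (fun l _ _ => hTnn l)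
    -- arithmetic comparison
    have hnat : (2 * 3 ^ m) ^ e ≤ 2 ^ e * ((3 ^ e - 1 + m).choose m) * m.factorial := by
      have h1 := pow_le_choose_mul_factorial (3 ^ e - 1) m
      rw [Nat.sub_add_cancel (hkpow 3 (by omega))] at h1
      calc (2 * 3 ^ m) ^ e = 2 ^ e * (3 ^ e) ^ m := by
            rw [mul_pow, ← pow_mul, ← pow_mul, Nat.mul_comm m e]
        _ ≤ 2 ^ e * ((3 ^ e - 1 + m).choose m * m.factorial) := Nat.mul_le_mul_left _ h1
        _ = 2 ^ e * ((3 ^ e - 1 + m).choose m) * m.factorial := by ring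
    have hfact : (0 : ℚ) < (m.factorial : ℚ) := by
      exact_mod_cast m.factorial_pos
    rw [div_lt_iff₀ hfact]
    have hq1 : ((2 * 3 ^ m : ℕ) : ℚ) ^ e
        ≤ ((2 ^ e * ((3 ^ e - 1 + m).choose m) : ℕ) : ℚ) * (m.factorial : ℚ) := by
      have : (((2 * 3 ^ m) ^ e : ℕ) : ℚ)
          ≤ ((2 ^ e * ((3 ^ e - 1 + m).choose m) * m.factorial : ℕ) : ℚ) :=
        Nat.cast_le.mpr hnat
      push_cast at this ⊢
      linarith
    have hq2 : ((2 ^ e * ((3 ^ e - 1 + m).choose m) : ℕ) : ℚ) * (m.factorial : ℚ)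
        < p n * (m.factorial : ℚ) := by
      apply mul_lt_mul_of_pos_right _ hfact
      have : (0:ℚ) < 1 := one_pos
      linarith [hlow]
    linarith
  · -- UPPER BOUND
    have hup : ∀ l ∈ S, (∏ k ∈ Finset.Icc 1 n, f k (l k))
        ≤ ((gmax n : ℕ) : ℚ) ^ e *
          (if (∀ k ∈ Finset.Icc 1 n, k ∣ l k) then 1 else 0) := by
      intro l hlS
      by_cases hdvd : ∀ k ∈ Finset.Icc 1 n, k ∣ l k
      · rw [if_pos hdvd, mul_one]
        have step1 : (∏ k ∈ Finset.Icc 1 n, f k (l k))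
            ≤ ∏ k ∈ Finset.Icc 1 n, (((k ^ (l k / k) : ℕ) : ℚ)) ^ e := by
          apply Finset.prod_le_prod (fun k _ => hfnn k (l k))
          intro k hk
          have hk1 : 1 ≤ k := (Finset.mem_Icc.mp hk).1
          rw [hfd]
          dsimp only
          rw [if_pos (hdvd k hk)]
          have hb := choose_add_le_pow_succ (k ^ e - 1) (l k / k)
          rw [Nat.sub_add_cancel (hkpow k hk1)] at hb
          calc (((k ^ e - 1 + l k / k).choose (l k / k) : ℕ) : ℚ)
              ≤ (((k ^ e) ^ (l k / k) : ℕ) : ℚ) := Nat.cast_le.mpr hb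
            _ = (((k ^ (l k / k) : ℕ) : ℚ)) ^ e := by
                rw [← pow_mul, Nat.mul_comm, pow_mul]
                push_cast
                ring
        have step3 : (∏ k ∈ Finset.Icc 1 n, k ^ (l k / k)) ≤ gmax n := by
          apply prod_pow_le_gmax n (Finset.Icc 1 n) (fun k => l k / k)
            (fun k hk => (Finset.mem_Icc.mp hk).1)
          have hsml : ∑ k ∈ Finset.Icc 1 n, l k = n := by
            rw [hS, Finset.mem_finsuppAntidiag] at hlS
            exact hlS.1
          have heq : ∑ k ∈ Finset.Icc 1 n, k * (l k / k) = ∑ k ∈ Finset.Icc 1 n, l k :=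
            Finset.sum_congr rfl (fun k hk => Nat.mul_div_cancel' (hdvd k hk))
          rw [heq, hsml]
        calc (∏ k ∈ Finset.Icc 1 n, f k (l k))
            ≤ ∏ k ∈ Finset.Icc 1 n, (((k ^ (l k / k) : ℕ) : ℚ)) ^ e := step1
          _ = (((∏ k ∈ Finset.Icc 1 n, k ^ (l k / k) : ℕ) : ℚ)) ^ e := by
              rw [Finset.prod_pow]
              push_cast
              ring
          _ ≤ ((gmax n : ℕ) : ℚ) ^ e := by
              apply pow_le_pow_left₀ (by positivity)
              exact_mod_cast step3
      · rw [if_neg hdvd, mul_zero]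
        push_neg at hdvd
        obtain ⟨k0, hk0, hnd⟩ := hdvd
        have hz : f k0 (l k0) = 0 := by
          rw [hfd]
          dsimp only
          rw [if_neg hnd]
        rw [Finset.prod_eq_zero hk0 hz]
    have hchain : p n ≤ ((gmax n : ℕ) : ℚ) ^ e *
        ((S.filter (fun l : ℕ →₀ ℕ => ∀ k ∈ Finset.Icc 1 n, k ∣ l k)).card : ℚ) := by
      rw [hcoeff]
      calc ∑ l ∈ S, ∏ k ∈ Finset.Icc 1 n, f k (l k)
          ≤ ∑ l ∈ S, ((gmax n : ℕ) : ℚ) ^ e *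
              (if (∀ k ∈ Finset.Icc 1 n, k ∣ l k) then 1 else 0) :=
            Finset.sum_le_sum hup
        _ = ((gmax n : ℕ) : ℚ) ^ e *
              ∑ l ∈ S, (if (∀ k ∈ Finset.Icc 1 n, k ∣ l k) then (1:ℚ) else 0) := by
            rw [Finset.mul_sum]
        _ = ((gmax n : ℕ) : ℚ) ^ e *
            ((S.filter (fun l : ℕ →₀ ℕ => ∀ k ∈ Finset.Icc 1 n, k ∣ l k)).card : ℚ) := by
            rw [Finset.sum_boole]
    have hcard := card_dvd_filter_le n (by omega)
    have hgm : gmax n = 2 * 3 ^ m := gmax_mod_two h3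
    calc p n ≤ ((gmax n : ℕ) : ℚ) ^ e *
        ((S.filter (fun l : ℕ →₀ ℕ => ∀ k ∈ Finset.Icc 1 n, k ∣ l k)).card : ℚ) := hchain
      _ ≤ ((gmax n : ℕ) : ℚ) ^ e * (Fintype.card (Nat.Partition n) : ℚ) := by
          apply mul_le_mul_of_nonneg_left _ (by positivity)
          rw [hS]
          exact_mod_cast hcard
      _ = ((2 * 3 ^ m : ℕ) : ℚ) ^ e * (Fintype.card (Nat.Partition n) : ℚ) := by
          rw [hgm]
end
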